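/- arXiv:2508.18021 — 5 statements merged into one kernel-verified Lean document; each statement's English description precedes it below -/
import Mathlib

section
/- Let W : ℂ → ℂ be an entire function with W(z+1) = W(z) for all z. Assume ∫₀¹ W(x) dx = c₀ is a real number with c₀ > 0, and that for every z ∈ ℂ with |Im z| ≤ 1 one has W(z) ≠ 0 and |Im W(z)| ≤ Re W(z). Then W has a Stokes loop; more precisely, there exists a smooth 1-periodic function f : ℝ → ℝ with |f(t)| ≤ 1 for all t such that γ(t) := t + i f(t) satisfies: γ(t+1) = γ(t) + 1, γ descends to a non-self-intersecting closed curve on ℂ/ℤ, and W(γ(t))·γ′(t) is a positive real number for every t ∈ ℝ. -/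
noncomputable section

open Complex intervalIntegral Set

def Psi (W : ℂ → ℂ) (z : ℂ) : ℂ :=
  (∫ s in (0:ℝ)..z.re, W s) + I * ∫ s in (0:ℝ)..z.im, W (z.re + s * I)

lemma Psi_sub {W : ℂ → ℂ} (hW : Differentiable ℂ W) (z₀ z : ℂ) :
    Psi W z - Psi W z₀ =
      (∫ s in z₀.re..z.re, W (s + z₀.im * I)) + I * ∫ s in z₀.im..z.im, W (z.re + s * I) := by
  have hWc : Continuous W := hW.continuous
  have rect := integral_boundary_rect_eq_zero_of_differentiableOn W ((z₀.re : ℂ))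
      ((z.re : ℂ) + z₀.im * I) hW.differentiableOn
  simp only [ofReal_re, ofReal_im, add_re, mul_re, I_re, I_im, add_im, mul_im, ofReal_zero,
    mul_zero, mul_one, zero_mul, sub_zero, zero_add, add_zero, zero_sub, neg_zero,
    ofReal_zero, smul_eq_mul] at rect
  have e1 : (∫ s in (0:ℝ)..z.re, W s) - ∫ s in (0:ℝ)..z₀.re, W s
      = ∫ s in z₀.re..z.re, W s :=
    integral_interval_sub_left ((hWc.comp continuous_ofReal).intervalIntegrable _ _)
      ((hWc.comp continuous_ofReal).intervalIntegrable _ _)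
  have e2 : (∫ s in (0:ℝ)..z.im, W (z.re + s * I)) - ∫ s in (0:ℝ)..z₀.im, W (z.re + s * I)
      = ∫ s in z₀.im..z.im, W (z.re + s * I) :=
    integral_interval_sub_left ((hWc.comp (by continuity)).intervalIntegrable _ _)
      ((hWc.comp (by continuity)).intervalIntegrable _ _)
  simp only [Psi]
  linear_combination rect + e1 + Complex.I * e2

lemma hasDerivAt_Psi {W : ℂ → ℂ} (hW : Differentiable ℂ W) (z₀ : ℂ) :
    HasDerivAt (Psi W) (W z₀) z₀ := by
  have hWc : Continuous W := hW.continuous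
  rw [hasDerivAt_iff_isLittleO, Asymptotics.isLittleO_iff]
  intro c hc
  obtain ⟨δ, hδ, hδW⟩ := Metric.continuousAt_iff.1 hWc.continuousAt (c/2) (by linarith)
  rw [Metric.eventually_nhds_iff]
  refine ⟨δ/2, by linarith, fun z hz => ?_⟩
  have hd : dist z z₀ < δ/2 := hz
  have key : Psi W z - Psi W z₀ - (z - z₀) • W z₀
      = (∫ s in z₀.re..z.re, (W (s + z₀.im * I) - W z₀))
        + I * ∫ s in z₀.im..z.im, (W (z.re + s * I) - W z₀) := by
    have i1 : (∫ s in z₀.re..z.re, (W (s + z₀.im * I) - W z₀))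
        = (∫ s in z₀.re..z.re, W (s + z₀.im * I)) - (z.re - z₀.re) • W z₀ := by
      rw [intervalIntegral.integral_sub (Continuous.intervalIntegrable (by continuity) _ _)
        (intervalIntegrable_const), intervalIntegral.integral_const]
    have i2 : (∫ s in z₀.im..z.im, (W (z.re + s * I) - W z₀))
        = (∫ s in z₀.im..z.im, W (z.re + s * I)) - (z.im - z₀.im) • W z₀ := by
      rw [intervalIntegral.integral_sub (Continuous.intervalIntegrable (by continuity) _ _)
        (intervalIntegrable_const), intervalIntegral.integral_const]
    rw [i1, i2, Psi_sub hW z₀ z]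
    have hz' : z - z₀ = ((z.re - z₀.re : ℝ) : ℂ) + ((z.im - z₀.im : ℝ)) * I := by
      apply Complex.ext <;> simp
    rw [hz']
    simp only [real_smul, smul_eq_mul]
    push_cast
    ring
  rw [key]
  have b1 : ‖∫ s in z₀.re..z.re, (W (s + z₀.im * I) - W z₀)‖ ≤ (c/2) * |z.re - z₀.re| := by
    apply intervalIntegral.norm_integral_le_of_norm_le_const
    intro s hs
    have hs' : |s - z₀.re| ≤ |z.re - z₀.re| := by
      rcases Set.mem_uIoc.1 hs with h | h <;> rw [abs_sub_le_iff] <;>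
        constructor <;> rcases abs_cases (z.re - z₀.re) with ⟨h2, h3⟩ | ⟨h2, h3⟩ <;> linarith
    have : dist (↑s + ↑z₀.im * I) z₀ < δ := by
      rw [Complex.dist_eq]
      have he : (↑s + ↑z₀.im * I) - z₀ = ((s - z₀.re : ℝ) : ℂ) := by
        apply Complex.ext <;> simp
      rw [he, Complex.norm_real, Real.norm_eq_abs]
      calc |s - z₀.re| ≤ |z.re - z₀.re| := hs'
        _ ≤ ‖z - z₀‖ := by simpa using Complex.abs_re_le_norm (z - z₀)
        _ < δ := by rw [Complex.dist_eq] at hd; linarith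
    exact le_of_lt (by simpa [Complex.dist_eq] using hδW this)
  have b2 : ‖∫ s in z₀.im..z.im, (W (z.re + s * I) - W z₀)‖ ≤ (c/2) * |z.im - z₀.im| := by
    apply intervalIntegral.norm_integral_le_of_norm_le_const
    intro s hs
    have hs' : |s - z₀.im| ≤ |z.im - z₀.im| := by
      rcases Set.mem_uIoc.1 hs with h | h <;> rw [abs_sub_le_iff] <;>
        constructor <;> rcases abs_cases (z.im - z₀.im) with ⟨h2, h3⟩ | ⟨h2, h3⟩ <;> linarith
    have : dist (↑z.re + ↑s * I) z₀ < δ := by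
      rw [Complex.dist_eq]
      have he : (↑z.re + ↑s * I) - z₀ = ((z.re - z₀.re : ℝ) : ℂ) + ((s - z₀.im : ℝ)) * I := by
        apply Complex.ext <;> simp
      calc ‖(↑z.re + ↑s * I) - z₀‖
          ≤ |z.re - z₀.re| + |s - z₀.im| := by
            rw [he]
            refine (norm_add_le _ _).trans ?_
            rw [norm_mul, Complex.norm_I, mul_one, Complex.norm_real, Complex.norm_real, Real.norm_eq_abs, Real.norm_eq_abs]
        _ ≤ ‖z - z₀‖ + ‖z - z₀‖ := by
            have h1 : |z.re - z₀.re| ≤ ‖z - z₀‖ := by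
              simpa using Complex.abs_re_le_norm (z - z₀)
            have h2 : |z.im - z₀.im| ≤ ‖z - z₀‖ := by
              simpa using Complex.abs_im_le_norm (z - z₀)
            linarith
        _ < δ := by rw [Complex.dist_eq] at hd; linarith
    exact le_of_lt (by simpa [Complex.dist_eq] using hδW this)
  calc ‖(∫ s in z₀.re..z.re, (W (s + z₀.im * I) - W z₀))
        + I * ∫ s in z₀.im..z.im, (W (z.re + s * I) - W z₀)‖
      ≤ ‖∫ s in z₀.re..z.re, (W (s + z₀.im * I) - W z₀)‖
        + ‖I * ∫ s in z₀.im..z.im, (W (z.re + s * I) - W z₀)‖ := norm_add_le _ _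
    _ ≤ (c/2) * |z.re - z₀.re| + (c/2) * |z.im - z₀.im| := by
        rw [norm_mul, Complex.norm_I, one_mul]; linarith
    _ ≤ (c/2) * ‖z - z₀‖ + (c/2) * ‖z - z₀‖ := by
        have h1 : |z.re - z₀.re| ≤ ‖z - z₀‖ := by simpa using Complex.abs_re_le_norm (z - z₀)
        have h2 : |z.im - z₀.im| ≤ ‖z - z₀‖ := by simpa using Complex.abs_im_le_norm (z - z₀)
        nlinarith [norm_nonneg (z - z₀)]
    _ = c * ‖z - z₀‖ := by ring


lemma Psi_ofReal {W : ℂ → ℂ} (x : ℝ) : Psi W (x : ℂ) = ∫ s in (0:ℝ)..x, W s := by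
  simp [Psi]


section helpers
variable {W : ℂ → ℂ}

lemma him_hasDerivAt (hW : Differentiable ℂ W) {γ : ℝ → ℂ} {v : ℂ} {t : ℝ}
    (hγ : HasDerivAt γ v t) :
    HasDerivAt (fun t => (Psi W (γ t)).im) ((W (γ t) * v).im) t := by
  have h1 : HasDerivAt (fun t => Psi W (γ t)) (W (γ t) * v) t := by
    have := ((hasDerivAt_Psi hW (γ t)).complexToReal_fderiv).comp_hasDerivAt t hγ
    simpa [smul_eq_mul, Function.comp_def] using this
  have h2 := (Complex.imCLM.hasFDerivAt (x := Psi W (γ t))).comp_hasDerivAt t h1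
  simpa [Function.comp_def] using h2

lemma Psi_add_one (hW : Differentiable ℂ W) (hWper : ∀ z, W (z + 1) = W z)
    {c0 : ℝ} (hc0 : (∫ x in (0:ℝ)..1, W (x : ℂ)) = (c0 : ℂ)) (z : ℂ) :
    Psi W (z + 1) = Psi W z + c0 := by
  have hdiff : Differentiable ℂ (fun z => Psi W (z + 1) - Psi W z) := by
    intro z
    exact (((hasDerivAt_Psi hW (z+1)).comp z ((hasDerivAt_id z).add_const 1)).sub
      (hasDerivAt_Psi hW z)).differentiableAt
  have hzero : ∀ z : ℂ, fderiv ℂ (fun z => Psi W (z + 1) - Psi W z) z = 0 := by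
    intro z
    have hd : HasDerivAt (fun z => Psi W (z + 1) - Psi W z) 0 z := by
      have := ((hasDerivAt_Psi hW (z+1)).comp z ((hasDerivAt_id z).add_const 1)).sub
        (hasDerivAt_Psi hW z)
      simpa [hWper z, mul_one, Function.comp_def, Pi.sub_def] using this
    have := hd.hasFDerivAt.fderiv
    rw [this]; ext; simp
  have hconst := is_const_of_fderiv_eq_zero hdiff hzero z 0
  have h0 : Psi W (0:ℂ) = 0 := by
    have := Psi_ofReal (W := W) 0
    simpa using this
  have h1 : Psi W (1:ℂ) = (c0 : ℂ) := by
    have := Psi_ofReal (W := W) 1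
    rw [← hc0]; simpa using this
  have : Psi W (z + 1) - Psi W z = Psi W (0 + 1) - Psi W 0 := hconst
  rw [h0, zero_add, h1, sub_zero] at this
  linear_combination this

def hh (W : ℂ → ℂ) (x y : ℝ) : ℝ := (Psi W ((x : ℂ) + (y : ℝ) * I)).im

lemma hh_cont (hW : Differentiable ℂ W) : Continuous fun p : ℝ × ℝ => hh W p.1 p.2 := by
  have hPsi : Continuous (Psi W) := by
    have : Differentiable ℂ (Psi W) := fun z => (hasDerivAt_Psi hW z).differentiableAt
    exact this.continuous
  exact Complex.continuous_im.comp (hPsi.comp (by continuity))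

lemma hh_hasDerivAt_y (hW : Differentiable ℂ W) (x y : ℝ) :
    HasDerivAt (fun y => hh W x y) ((W ((x : ℂ) + (y : ℝ) * I)).re) y := by
  have hγ : HasDerivAt (fun y : ℝ => (x : ℂ) + (y : ℝ) * I) I y := by
    have h1 : HasDerivAt (fun y : ℝ => ((y : ℝ) : ℂ)) 1 y := (hasDerivAt_id y).ofReal_comp
    simpa using (h1.mul_const I).const_add (x : ℂ)
  have := him_hasDerivAt hW hγ
  simpa [Complex.mul_I_im, hh] using this

lemma hh_per (hW : Differentiable ℂ W) (hWper : ∀ z, W (z + 1) = W z)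
    {c0 : ℝ} (hc0 : (∫ x in (0:ℝ)..1, W (x : ℂ)) = (c0 : ℂ)) (x y : ℝ) :
    hh W (x + 1) y = hh W x y := by
  have he : ((x + 1 : ℝ) : ℂ) + (y : ℝ) * I = ((x : ℂ) + (y : ℝ) * I) + 1 := by push_cast; ring
  rw [hh, he, Psi_add_one hW hWper hc0]
  simp [hh]

lemma hRe (hstrip : ∀ z : ℂ, |z.im| ≤ 1 → W z ≠ 0 ∧ |(W z).im| ≤ (W z).re)
    {z : ℂ} (hz : |z.im| ≤ 1) : 0 < (W z).re := by
  obtain ⟨hne, him⟩ := hstrip z hz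
  rcases lt_or_eq_of_le ((abs_nonneg _).trans him) with h | h
  · exact h
  · exfalso
    apply hne
    have him0 : (W z).im = 0 := by
      have := him; rw [← h] at this
      have := abs_nonneg (W z).im
      apply abs_eq_zero.1; linarith
    apply Complex.ext <;> simp [← h, him0]

lemma hh_strictMono (hW : Differentiable ℂ W)
    (hstrip : ∀ z : ℂ, |z.im| ≤ 1 → W z ≠ 0 ∧ |(W z).im| ≤ (W z).re) (x : ℝ) :
    StrictMonoOn (hh W x) (Icc (-1 : ℝ) 1) := by
  apply strictMonoOn_of_deriv_pos (convex_Icc _ _)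
  · exact ((hh_cont hW).comp (by continuity : Continuous fun y : ℝ => ((x, y) : ℝ × ℝ))).continuousOn
  · intro y hy
    rw [interior_Icc, mem_Ioo] at hy
    rw [(hh_hasDerivAt_y hW x y).deriv]
    apply hRe hstrip
    simp only [add_im, ofReal_im, mul_im, ofReal_re, I_im, I_re, mul_zero, mul_one, zero_add]
    rw [abs_le]; constructor <;> linarith

lemma hh_lt (hW : Differentiable ℂ W)
    (hstrip : ∀ z : ℂ, |z.im| ≤ 1 → W z ≠ 0 ∧ |(W z).im| ≤ (W z).re)
    {x x' : ℝ} (hxx : |x - x'| ≤ 1) : hh W x' (-1) < hh W x 1 := by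
  set d : ℝ := x - x' with hd
  set γ : ℝ → ℂ := fun t => ((x' + t * d : ℝ) : ℂ) + ((-1 + 2 * t : ℝ) : ℝ) * I with hγdef
  have hγd : ∀ t : ℝ, HasDerivAt γ ((d : ℂ) + 2 * I) t := by
    intro t
    have h1 : HasDerivAt (fun t : ℝ => ((x' + t * d : ℝ) : ℂ)) (d : ℂ) t := by
      apply HasDerivAt.ofReal_comp
      simpa using ((hasDerivAt_id t).mul_const d).const_add x'
    have h2 : HasDerivAt (fun t : ℝ => ((-1 + 2 * t : ℝ) : ℂ) * I) ((2 : ℂ) * I) t := by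
      apply HasDerivAt.mul_const
      apply HasDerivAt.ofReal_comp
      simpa using ((hasDerivAt_id t).const_mul (2:ℝ)).const_add (-1 : ℝ)
    exact h1.add h2
  have him : ∀ t : ℝ, t ∈ Icc (0:ℝ) 1 → |(γ t).im| ≤ 1 := by
    intro t ht
    simp only [hγdef, add_im, ofReal_im, mul_im, ofReal_re, I_im, I_re, mul_zero, mul_one,
      zero_add]
    rw [abs_le]; constructor <;> [linarith [ht.1]; linarith [ht.2]]
  have hderiv : ∀ t : ℝ, HasDerivAt (fun t => (Psi W (γ t)).im)
      ((W (γ t) * ((d : ℂ) + 2 * I)).im) t := fun t => him_hasDerivAt hW (hγd t)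
  have hpos : ∀ t ∈ interior (Icc (0:ℝ) 1), 0 < deriv (fun t => (Psi W (γ t)).im) t := by
    intro t ht
    rw [interior_Icc, mem_Ioo] at ht
    rw [(hderiv t).deriv]
    have hs := hstrip (γ t) (him t ⟨le_of_lt ht.1, le_of_lt ht.2⟩)
    have ha := hRe hstrip (him t ⟨le_of_lt ht.1, le_of_lt ht.2⟩)
    set a := (W (γ t)).re
    set b := (W (γ t)).im
    have hcompute : (W (γ t) * ((d : ℂ) + 2 * I)).im = a * 2 + b * d := by
      simp [Complex.mul_im]; rfl
    rw [hcompute]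
    have hb : |b| ≤ a := hs.2
    have h1 : |b * d| ≤ a * 1 := by
      rw [abs_mul]
      exact mul_le_mul hb hxx (abs_nonneg d) (le_of_lt ha)
    have := abs_le.1 h1
    linarith [this.1]
  have hmono := strictMonoOn_of_deriv_pos (convex_Icc (0:ℝ) 1)
    (Continuous.continuousOn (by
      have : Continuous γ := by
        apply Continuous.add
        · exact Complex.continuous_ofReal.comp (by continuity)
        · exact (Complex.continuous_ofReal.comp (by continuity)).mul continuous_const
      exact Complex.continuous_im.comp ((Differentiable.continuous
        (fun z => (hasDerivAt_Psi hW z).differentiableAt : Differentiable ℂ (Psi W))).comp this))) hpos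
  have h01 := hmono (by norm_num : (0:ℝ) ∈ Icc (0:ℝ) 1) (by norm_num : (1:ℝ) ∈ Icc (0:ℝ) 1)
    (by norm_num)
  have hγ0 : γ 0 = (x' : ℂ) + ((-1 : ℝ) : ℝ) * I := by simp [hγdef]
  have hγ1 : γ 1 = (x : ℂ) + ((1 : ℝ) : ℝ) * I := by
    simp only [hγdef]; norm_num [hd]
  have e0 : hh W x' (-1) = (Psi W (γ 0)).im := by rw [hγ0]; rfl
  have e1 : hh W x 1 = (Psi W (γ 1)).im := by rw [hγ1]; rfl
  rw [e0, e1]; exact h01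


lemma hh_def' (W : ℂ → ℂ) (x y : ℝ) : hh W x y = (Psi W ((x : ℂ) + (y : ℝ) * I)).im := rfl

end helpers

attribute [irreducible] Psi hh

theorem stmt1
    (W : ℂ → ℂ) (hW : Differentiable ℂ W) (hWper : ∀ z, W (z + 1) = W z)
    (c0 : ℝ) (hc0 : (∫ x in (0:ℝ)..1, W (x : ℂ)) = (c0 : ℂ)) (hc0pos : 0 < c0)
    (hstrip : ∀ z : ℂ, |z.im| ≤ 1 → W z ≠ 0 ∧ |(W z).im| ≤ (W z).re) :
    ∃ f : ℝ → ℝ, ContDiff ℝ (⊤ : ℕ∞) f ∧ (∀ t, f (t + 1) = f t) ∧ (∀ t, |f t| ≤ 1) ∧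
      (∀ t : ℝ, ((t + 1 : ℝ) : ℂ) + Complex.I * (f (t + 1) : ℂ)
          = ((t : ℝ) : ℂ) + Complex.I * (f t : ℂ) + 1) ∧
      (∀ s t : ℝ, (∃ m : ℤ, (((s : ℂ) + Complex.I * (f s : ℂ))
            - ((t : ℂ) + Complex.I * (f t : ℂ))) = (m : ℂ)) →
          ∃ m : ℤ, s - t = (m : ℝ)) ∧
      (∀ t : ℝ, ∃ r : ℝ, 0 < r ∧
        W ((t : ℂ) + Complex.I * (f t : ℂ))
          * deriv (fun s : ℝ => (s : ℂ) + Complex.I * (f s : ℂ)) t = (r : ℂ)) := by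
  classical
  have hWc : Continuous W := hW.continuous
  have hhc : Continuous fun p : ℝ × ℝ => hh W p.1 p.2 := hh_cont hW
  have hcontx : ∀ u : ℝ, Continuous fun x => hh W x u := fun u =>
    hhc.comp (continuous_id.prodMk continuous_const)
  have hconty : ∀ x : ℝ, Continuous fun y => hh W x y := fun x =>
    hhc.comp (continuous_const.prodMk continuous_id)
  have hper : ∀ x y, hh W (x + 1) y = hh W x y := hh_per hW hWper hc0
  have hperZ : ∀ x y : ℝ, hh W (Int.fract x) y = hh W x y := by
    intro x y
    have hp : Function.Periodic (fun x => hh W x y) 1 := fun x => hper x y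
    have := hp.sub_int_mul_eq (x := x) ⌊x⌋
    rw [Int.fract]
    simpa using this
  -- choice of level c
  obtain ⟨x₁, hx₁mem, hx₁max⟩ := isCompact_Icc.exists_isMaxOn (α := ℝ)
    (nonempty_Icc.2 (by norm_num : (0:ℝ) ≤ 1)) ((hcontx (-1)).continuousOn)
  obtain ⟨x₂, hx₂mem, hx₂min⟩ := isCompact_Icc.exists_isMinOn (α := ℝ)
    (nonempty_Icc.2 (by norm_num : (0:ℝ) ≤ 1)) ((hcontx 1).continuousOn)
  set c : ℝ := (hh W x₁ (-1) + hh W x₂ 1) / 2 with hcdef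
  have hkey : hh W x₁ (-1) < hh W x₂ 1 := by
    apply hh_lt hW hstrip
    rw [abs_le]
    constructor <;> [linarith [hx₂mem.1, hx₁mem.2]; linarith [hx₂mem.2, hx₁mem.1]]
  have hlow : ∀ x : ℝ, hh W x (-1) < c := by
    intro x
    have h1 : hh W x (-1) = hh W (Int.fract x) (-1) := (hperZ x (-1)).symm
    have h2 : hh W (Int.fract x) (-1) ≤ hh W x₁ (-1) :=
      hx₁max ⟨Int.fract_nonneg x, (Int.fract_lt_one x).le⟩
    rw [h1, hcdef]; linarith
  have hhigh : ∀ x : ℝ, c < hh W x 1 := by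
    intro x
    have h1 : hh W x 1 = hh W (Int.fract x) 1 := (hperZ x 1).symm
    have h2 : hh W x₂ 1 ≤ hh W (Int.fract x) 1 :=
      hx₂min ⟨Int.fract_nonneg x, (Int.fract_lt_one x).le⟩
    rw [h1, hcdef]; linarith
  -- definition of f
  have hex : ∀ x : ℝ, ∃ y, y ∈ Icc (-1:ℝ) 1 ∧ hh W x y = c := by
    intro x
    have hivt := intermediate_value_Icc (by norm_num : (-1:ℝ) ≤ 1) (hconty x).continuousOn
    have hc : c ∈ Icc (hh W x (-1)) (hh W x 1) := ⟨(hlow x).le, (hhigh x).le⟩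
    obtain ⟨y, hy, hyc⟩ := hivt hc
    exact ⟨y, hy, hyc⟩
  choose f hfmem hfc using hex
  have hbound : ∀ t : ℝ, |f t| ≤ 1 := fun t => abs_le.2 ⟨(hfmem t).1, (hfmem t).2⟩
  have hmono : ∀ x : ℝ, StrictMonoOn (hh W x) (Icc (-1:ℝ) 1) := hh_strictMono hW hstrip
  have huniq : ∀ x : ℝ, ∀ y₁ ∈ Icc (-1:ℝ) 1, ∀ y₂ ∈ Icc (-1:ℝ) 1,
      hh W x y₁ = hh W x y₂ → y₁ = y₂ := fun x => (hmono x).injOn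
  have hfper : ∀ t : ℝ, f (t + 1) = f t := by
    intro t
    apply huniq t _ (hfmem (t+1)) _ (hfmem t)
    rw [← hper t (f (t+1)), hfc (t+1), hfc t]
  -- continuity of f
  have hkey2 : ∀ x₀ : ℝ, ∀ ε : ℝ, 0 < ε → (∀ᶠ x in nhds x₀, f x < f x₀ + ε) ∧
      (∀ᶠ x in nhds x₀, f x₀ - ε < f x) := by
    intro x₀ ε hε
    have hup : ∀ᶠ x in nhds x₀, f x < f x₀ + ε := by
      rcases le_or_gt (f x₀ + ε) 1 with hle | hgt
      · have hu : f x₀ + ε ∈ Icc (-1:ℝ) 1 := ⟨by linarith [(hfmem x₀).1], hle⟩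
        have h1 : c < hh W x₀ (f x₀ + ε) := by
          rw [← hfc x₀]
          exact hmono x₀ (hfmem x₀) hu (by linarith)
        have h2 : ∀ᶠ x in nhds x₀, c < hh W x (f x₀ + ε) :=
          ((hcontx (f x₀ + ε)).continuousAt (x := x₀)).eventually_const_lt h1
        filter_upwards [h2] with x hx
        by_contra hcon
        push_neg at hcon
        have hle2 : hh W x (f x₀ + ε) ≤ hh W x (f x) := (hmono x).monotoneOn hu (hfmem x) hcon
        rw [hfc x] at hle2; linarith
      · filter_upwards with x; linarith [(hfmem x).2]
    have hdn : ∀ᶠ x in nhds x₀, f x₀ - ε < f x := by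
      rcases le_or_gt (-1 : ℝ) (f x₀ - ε) with hle | hgt
      · have hu : f x₀ - ε ∈ Icc (-1:ℝ) 1 := ⟨hle, by linarith [(hfmem x₀).2]⟩
        have h1 : hh W x₀ (f x₀ - ε) < c := by
          rw [← hfc x₀]
          exact hmono x₀ hu (hfmem x₀) (by linarith)
        have h2 : ∀ᶠ x in nhds x₀, hh W x (f x₀ - ε) < c :=
          ((hcontx (f x₀ - ε)).continuousAt (x := x₀)).eventually_lt_const h1
        filter_upwards [h2] with x hx
        by_contra hcon
        push_neg at hcon
        have hle2 : hh W x (f x) ≤ hh W x (f x₀ - ε) := (hmono x).monotoneOn (hfmem x) hu hcon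
        rw [hfc x] at hle2; linarith
      · filter_upwards with x; linarith [(hfmem x).1]
    exact ⟨hup, hdn⟩
  have hcontf : Continuous f := by
    rw [continuous_iff_continuousAt]
    intro x₀
    rw [ContinuousAt, tendsto_order]
    constructor
    · intro b hb
      filter_upwards [(hkey2 x₀ (f x₀ - b) (by linarith)).2] with x hx
      linarith
    · intro b hb
      filter_upwards [(hkey2 x₀ (b - f x₀) (by linarith)).1] with x hx
      linarith
  -- derivative of f
  set G : ℂ → ℝ := fun z => -(W z).im / (W z).re with hGdef
  have hfderiv : ∀ x₀ : ℝ, HasDerivAt f (G ((x₀ : ℂ) + (f x₀ : ℝ) * I)) x₀ := by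
    intro x₀
    set z₀ : ℂ := (x₀ : ℂ) + (f x₀ : ℝ) * I with hz₀
    have hz₀im : |z₀.im| ≤ 1 := by
      simpa [hz₀] using hbound x₀
    have ha₀ := hRe hstrip hz₀im
    have key : ∀ x : ℝ, x ≠ x₀ → ∃ ζ : ℂ, |ζ.im| ≤ 1 ∧
        ‖ζ - z₀‖ ≤ |x - x₀| + |f x - f x₀| ∧ slope f x₀ x = G ζ := by
      intro x hx
      set Δx : ℝ := x - x₀ with hΔx
      set Δy : ℝ := f x - f x₀ with hΔy
      set γ : ℝ → ℂ := fun t => ((x₀ + t * Δx : ℝ) : ℂ) + ((f x₀ + t * Δy : ℝ) : ℝ) * I with hγdef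
      set v : ℂ := (Δx : ℂ) + (Δy : ℝ) * I with hvdef
      have hγd : ∀ t : ℝ, HasDerivAt γ v t := by
        intro t
        have h1 : HasDerivAt (fun t : ℝ => ((x₀ + t * Δx : ℝ) : ℂ)) (Δx : ℂ) t := by
          apply HasDerivAt.ofReal_comp
          simpa using ((hasDerivAt_id t).mul_const Δx).const_add x₀
        have h2 : HasDerivAt (fun t : ℝ => ((f x₀ + t * Δy : ℝ) : ℂ) * I) ((Δy : ℂ) * I) t := by
          apply HasDerivAt.mul_const
          apply HasDerivAt.ofReal_comp
          simpa using ((hasDerivAt_id t).mul_const Δy).const_add (f x₀)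
        exact h1.add h2
      have hφd : ∀ t : ℝ, HasDerivAt (fun t => (Psi W (γ t)).im) ((W (γ t) * v).im) t :=
        fun t => him_hasDerivAt hW (hγd t)
      have hφc : ContinuousOn (fun t => (Psi W (γ t)).im) (Icc (0:ℝ) 1) :=
        (Differentiable.continuous (fun t => (hφd t).differentiableAt)).continuousOn
      obtain ⟨t, ht, hts⟩ := exists_hasDerivAt_eq_slope (fun t => (Psi W (γ t)).im)
        (fun t => (W (γ t) * v).im) one_pos hφc (fun t _ => hφd t)
      have hγ0 : γ 0 = (x₀ : ℂ) + ((f x₀ : ℝ) : ℝ) * I := by simp [hγdef]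
      have hγ1 : γ 1 = (x : ℂ) + ((f x : ℝ) : ℝ) * I := by
        simp only [hγdef]; norm_num [hΔx, hΔy]
      have hφ0 : (Psi W (γ 0)).im = c := by rw [hγ0, ← hh_def', hfc]
      have hφ1 : (Psi W (γ 1)).im = c := by rw [hγ1, ← hh_def', hfc]
      rw [hφ1, hφ0] at hts
      simp only [sub_self, zero_div] at hts
      set ζ : ℂ := γ t with hζ
      have hζim : ζ.im = f x₀ + t * Δy := by simp [hζ, hγdef]
      have him1 : |ζ.im| ≤ 1 := by
        rw [hζim]
        have h1 := abs_le.1 (hbound x₀)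
        have h2 := abs_le.1 (hbound x)
        rw [abs_le]
        constructor <;> nlinarith [ht.1.le, ht.2.le, hΔy]
      have ha : 0 < (W ζ).re := hRe hstrip him1
      have hzero : (W ζ).re * Δy + (W ζ).im * Δx = 0 := by
        have : (W ζ * v).im = (W ζ).re * Δy + (W ζ).im * Δx := by
          simp [hvdef, Complex.mul_im]
        rw [this] at hts
        linarith
      refine ⟨ζ, him1, ?_, ?_⟩
      · have he : ζ - z₀ = ((t * Δx : ℝ) : ℂ) + ((t * Δy : ℝ) : ℝ) * I := by
          rw [hζ, hγdef, hz₀]; push_cast; ring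
        rw [he]
        calc ‖((t * Δx : ℝ) : ℂ) + ((t * Δy : ℝ) : ℝ) * I‖
            ≤ ‖((t * Δx : ℝ) : ℂ)‖ + ‖(((t * Δy : ℝ) : ℝ) * I)‖ :=
              norm_add_le _ _
          _ = |t * Δx| + |t * Δy| := by
              rw [norm_mul, Complex.norm_I, mul_one, Complex.norm_real, Complex.norm_real, Real.norm_eq_abs, Real.norm_eq_abs]
          _ ≤ |Δx| + |Δy| := by
              rw [abs_mul, abs_mul]
              have h01 : |t| ≤ 1 := abs_le.2 ⟨by linarith [ht.1], by linarith [ht.2]⟩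
              nlinarith [abs_nonneg Δx, abs_nonneg Δy, abs_nonneg t]
      · rw [slope_def_field, hGdef]
        have hΔxne : Δx ≠ 0 := sub_ne_zero.2 hx
        field_simp
        rw [← hΔx, ← hΔy]
        linear_combination hzero
    -- construct ζ function and take limits
    set ζf : ℝ → ℂ := fun x => if hx : x ≠ x₀ then (key x hx).choose else z₀ with hζf
    have hζspec : ∀ x, x ≠ x₀ → |(ζf x).im| ≤ 1 ∧
        ‖ζf x - z₀‖ ≤ |x - x₀| + |f x - f x₀| ∧ slope f x₀ x = G (ζf x) := by
      intro x hx
      have : ζf x = (key x hx).choose := by rw [hζf]; simp [dif_pos hx]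
      rw [this]
      exact (key x hx).choose_spec
    have htend : Filter.Tendsto ζf (nhdsWithin x₀ {x₀}ᶜ) (nhds z₀) := by
      rw [tendsto_iff_dist_tendsto_zero]
      apply squeeze_zero' (Filter.Eventually.of_forall fun _ => dist_nonneg)
        (g := fun x => |x - x₀| + |f x - f x₀|)
      · filter_upwards [self_mem_nhdsWithin] with x hx
        have := (hζspec x hx).2.1
        rwa [Complex.dist_eq]
      · have hca : ContinuousAt (fun x => |x - x₀| + |f x - f x₀|) x₀ := by
          apply ContinuousAt.add
          · exact ((continuous_id.sub continuous_const).abs).continuousAt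
          · exact ((hcontf.sub continuous_const).abs).continuousAt
        exact (by simpa using hca.tendsto :
          Filter.Tendsto (fun x => |x - x₀| + |f x - f x₀|) (nhds x₀) (nhds 0)).mono_left
          nhdsWithin_le_nhds
    have hGcont : ContinuousAt G z₀ := by
      rw [hGdef]
      exact ((Complex.continuous_im.comp hWc).continuousAt.neg).div
        (Complex.continuous_re.comp hWc).continuousAt (ne_of_gt ha₀)
    rw [hasDerivAt_iff_tendsto_slope]
    apply (hGcont.tendsto.comp htend).congr'
    filter_upwards [self_mem_nhdsWithin] with x hx
    exact ((hζspec x hx).2.2).symm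
  -- smoothness
  have hWsm : ContDiff ℝ (⊤ : ℕ∞) W := (hW.contDiff (n := ((⊤ : ℕ∞) : WithTop ℕ∞))).restrict_scalars ℝ
  have hsmN : ∀ n : ℕ, ContDiff ℝ n f := by
    intro n
    induction n with
    | zero => exact contDiff_zero.2 hcontf
    | succ n ih =>
      have hgoal : ContDiff ℝ ((n : WithTop ℕ∞) + 1) f := by
        rw [contDiff_succ_iff_deriv]
        refine ⟨fun x => (hfderiv x).differentiableAt, by simp, ?_⟩
        have hd : deriv f = fun x : ℝ => G ((x : ℂ) + (f x : ℝ) * I) :=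
          funext fun x => (hfderiv x).deriv
        rw [hd]
        apply contDiff_iff_contDiffAt.2
        intro x
        have hcurve : ContDiffAt ℝ n (fun x : ℝ => (x : ℂ) + (f x : ℝ) * I) x := by
          apply ContDiffAt.add
          · exact Complex.ofRealCLM.contDiff.contDiffAt
          · exact ((Complex.ofRealCLM.contDiff.comp ih).contDiffAt).mul contDiffAt_const
        have hWat : ContDiffAt ℝ n W ((x : ℂ) + (f x : ℝ) * I) :=
          (hWsm.of_le (by exact_mod_cast le_top)).contDiffAt
        have hcomp : ContDiffAt ℝ n (fun x : ℝ => W ((x : ℂ) + (f x : ℝ) * I)) x :=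
          hWat.comp x hcurve
        rw [hGdef]
        apply ContDiffAt.div
        · exact (Complex.imCLM.contDiff.contDiffAt.comp x hcomp).neg
        · exact Complex.reCLM.contDiff.contDiffAt.comp x hcomp
        · apply ne_of_gt
          apply hRe hstrip
          simpa using hbound x
      exact_mod_cast hgoal
  have hsmooth : ContDiff ℝ (⊤ : ℕ∞) f := contDiff_infty.2 hsmN
  -- assembly
  refine ⟨f, hsmooth, hfper, hbound, ?_, ?_, ?_⟩
  · intro t
    rw [hfper t]
    push_cast
    ring
  · rintro s t ⟨m, hm⟩
    refine ⟨m, ?_⟩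
    have := congrArg Complex.re hm
    simpa using this
  · intro t
    set z : ℂ := (t : ℂ) + Complex.I * (f t : ℂ) with hz
    have hzz : (t : ℂ) + (f t : ℝ) * I = z := by rw [hz]; ring
    set a : ℝ := (W z).re with hadef
    set b : ℝ := (W z).im with hbdef
    have ha : 0 < a := hRe hstrip (by simpa [hz] using hbound t)
    have hGz : G z = -b / a := by rw [hGdef]
    have hder : HasDerivAt (fun s : ℝ => (s : ℂ) + Complex.I * (f s : ℂ))
        (1 + Complex.I * ((-b / a : ℝ) : ℂ)) t := by
      have h1 : HasDerivAt (fun s : ℝ => (s : ℂ)) 1 t := by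
        simpa using (hasDerivAt_id t).ofReal_comp
      have h2 : HasDerivAt (fun s : ℝ => ((f s : ℝ) : ℂ)) ((G z : ℝ) : ℂ) t := by
        have := (hfderiv t).ofReal_comp
        rwa [hzz] at this
      have h3 := h2.const_mul Complex.I
      rw [hGz] at h3
      exact h1.add h3
    rw [hder.deriv]
    refine ⟨a + b ^ 2 / a, by positivity, ?_⟩
    have hWz : W z = (a : ℂ) + (b : ℝ) * I := by
      rw [hadef, hbdef]
      exact (Complex.re_add_im (W z)).symm
    rw [hWz]
    have haC : (a : ℂ) ≠ 0 := Complex.ofReal_ne_zero.2 (ne_of_gt ha)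
    push_cast
    field_simp
    ring_nf
    rw [Complex.I_sq]
    ring
end
end

section
/- Let W : ℂ → ℂ be an entire function with W(z+1) = W(z) for all z, and let γ be a Stokes loop for W. Then the winding number of W along γ is zero: ∫₀¹ W′(γ(t))·γ′(t)/W(γ(t)) dt = 0. (Note W(γ(t)) ≠ 0 for all t since W(γ(t))γ′(t) > 0.) -/
noncomputable section

open Complex
open scoped ContDiff

private lemma loop_winding (L L' : ℝ → ℂ) (hd : ∀ s, HasDerivAt L (L' s) s)
    (hc : Continuous L') (hne : ∀ s, L s ≠ 0) (hper : L 1 = L 0) :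
    ∃ n : ℤ, (∫ s in (0:ℝ)..1, L' s / L s) = (n : ℂ) * (2 * Real.pi * Complex.I) := by
  have hLc : Continuous L := by
    rw [continuous_iff_continuousAt]; exact fun s => (hd s).continuousAt
  have hFc : Continuous fun s => L' s / L s := hc.div hLc hne
  set A : ℝ → ℂ := fun s => ∫ x in (0:ℝ)..s, L' x / L x with hA
  have hAd : ∀ s, HasDerivAt A (L' s / L s) s := fun s =>
    intervalIntegral.integral_hasDerivAt_right (hFc.intervalIntegrable _ _)
      (hFc.stronglyMeasurableAtFilter _ _) hFc.continuousAt
  set E : ℝ → ℂ := fun s => L s * Complex.exp (-A s) with hE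
  have hEd : ∀ s, HasDerivAt E 0 s := by
    intro s
    have h1 : HasDerivAt (fun s => Complex.exp (-A s))
        (Complex.exp (-A s) * (-(L' s / L s))) s := ((hAd s).neg).cexp
    have h2 : HasDerivAt (fun y => L y * Complex.exp (-A y))
        (L' s * Complex.exp (-A s) + L s * (Complex.exp (-A s) * -(L' s / L s))) s :=
      (hd s).mul h1
    convert h2 using 1
    field_simp [hne s]
    ring
  have hEc : E 1 = E 0 :=
    is_const_of_deriv_eq_zero (fun s => (hEd s).differentiableAt)
      (fun s => (hEd s).deriv) 1 0
  have hA0 : A 0 = 0 := intervalIntegral.integral_same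
  have hexp : Complex.exp (-A 1) = 1 := by
    have h := hEc
    simp only [hE, hA0, neg_zero, Complex.exp_zero, mul_one, hper] at h
    have h' : L 0 * Complex.exp (-A 1) = L 0 * 1 := by rw [mul_one]; exact h
    exact mul_left_cancel₀ (hne 0) h'
  obtain ⟨n, hn⟩ := Complex.exp_eq_one_iff.mp hexp
  refine ⟨-n, ?_⟩
  show A 1 = _
  push_cast
  linear_combination -hn

private lemma const_lattice (φ : ℝ → ℂ) (hc : Continuous φ)
    (hv : ∀ u, ∃ n : ℤ, φ u = (n : ℂ) * (2 * Real.pi * Complex.I)) : φ 0 = φ 1 := by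
  have normlem : ∀ m k : ℤ,
      ‖(m : ℂ) * (2 * Real.pi * Complex.I) - (k : ℂ) * (2 * Real.pi * Complex.I)‖
        = |((m - k : ℤ) : ℝ)| * (2 * Real.pi) := by
    intro m k
    rw [← sub_mul, norm_mul]
    have e1 : ((m : ℂ) - (k : ℂ)) = ((m - k : ℤ) : ℂ) := by push_cast; ring
    rw [e1, Complex.norm_intCast]
    have e2 : ‖(2 * (Real.pi : ℂ) * Complex.I)‖ = 2 * Real.pi := by
      simp [norm_mul, abs_of_pos Real.pi_pos]
    rw [e2]
  by_contra hner
  obtain ⟨n0, h0⟩ := hv 0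
  obtain ⟨n1, h1⟩ := hv 1
  have hψc : ContinuousOn (fun u => ‖φ u - φ 1‖) (Set.Icc 0 1) :=
    ((hc.sub continuous_const).norm).continuousOn
  have h10 : ‖φ 1 - φ 1‖ = 0 := by simp
  have hm : n0 ≠ n1 := by
    intro h; exact hner (by rw [h0, h1, h])
  have hge : 2 * Real.pi ≤ ‖φ 0 - φ 1‖ := by
    rw [h0, h1, normlem]
    have : (1:ℝ) ≤ |((n0 - n1 : ℤ) : ℝ)| := by
      rw [← Int.cast_abs]
      exact_mod_cast Int.one_le_abs (sub_ne_zero.mpr hm)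
    nlinarith [Real.pi_pos]
  have hπ : Real.pi ∈ Set.Icc (‖φ 1 - φ 1‖) (‖φ 0 - φ 1‖) := by
    constructor
    · rw [h10]; exact Real.pi_pos.le
    · nlinarith [Real.pi_pos]
  obtain ⟨u, hu, hψu0⟩ := intermediate_value_Icc' (by norm_num : (0:ℝ) ≤ 1) hψc hπ
  obtain ⟨nu, hnu⟩ := hv u
  have hψu : ‖φ u - φ 1‖ = Real.pi := hψu0
  rw [hnu, h1, normlem] at hψu
  rcases eq_or_ne nu n1 with h | h
  · rw [h] at hψu; simp at hψu
    exact Real.pi_ne_zero hψu.symm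
  · have : (1:ℝ) ≤ |((nu - n1 : ℤ) : ℝ)| := by
      rw [← Int.cast_abs]
      exact_mod_cast Int.one_le_abs (sub_ne_zero.mpr h)
    nlinarith [Real.pi_pos]

private lemma deriv_per (γ : ℝ → ℂ) (hγper : ∀ t : ℝ, γ (t + 1) = γ t + 1) :
    ∀ t, deriv γ (t + 1) = deriv γ t := by
  intro t
  have h2 : (fun s => γ (s + 1)) = fun s => γ s + 1 := funext hγper
  calc deriv γ (t + 1) = deriv (fun s => γ (s + 1)) t := (deriv_comp_add_const γ 1 t).symm
    _ = deriv (fun s => γ s + 1) t := by rw [h2]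
    _ = deriv γ t := deriv_add_const 1

private lemma winding_zero (γ : ℝ → ℂ) (hγ : ContDiff ℝ (⊤ : ℕ∞) γ)
    (hγper : ∀ t : ℝ, γ (t + 1) = γ t + 1)
    (hinj : ∀ s t : ℝ, (∃ m : ℤ, γ s - γ t = (m : ℂ)) → ∃ m : ℤ, s - t = (m : ℝ))
    (hne : ∀ t, deriv γ t ≠ 0) :
    (∫ t in (0:ℝ)..1, deriv (deriv γ) t / deriv γ t) = 0 := by
  have hγi : ContDiff ℝ ∞ γ := hγ
  obtain ⟨hγdiff, hgc'⟩ := contDiff_infty_iff_deriv.mp hγi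
  obtain ⟨hgdiff, hg2c'⟩ := contDiff_infty_iff_deriv.mp hgc'
  set g := deriv γ with hgdef
  set g2 := deriv (deriv γ) with hg2def
  have hγd : ∀ t, HasDerivAt γ (g t) t := fun t => (hγdiff t).hasDerivAt
  have hgd : ∀ t, HasDerivAt g (g2 t) t := fun t => (hgdiff t).hasDerivAt
  have hgc : Continuous g := hgc'.continuous
  have hg2c : Continuous g2 := hg2c'.continuous
  have hgper : ∀ t, g (t + 1) = g t := deriv_per γ hγper
  have hg2per : ∀ t, g2 (t + 1) = g2 t := by
    intro t
    have h2 : (fun s => g (s + 1)) = g := funext hgper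
    calc g2 (t + 1) = deriv (fun s => g (s + 1)) t := (deriv_comp_add_const g 1 t).symm
      _ = g2 t := by rw [h2]
  set Qg : ℝ → ℝ → ℂ := fun u s => ∫ σ in (0:ℝ)..1, g (s + σ * u) with hQg
  set Qg2 : ℝ → ℝ → ℂ := fun u s => ∫ σ in (0:ℝ)..1, g2 (s + σ * u) with hQg2
  -- closed forms
  have keyg : ∀ u : ℝ, u ≠ 0 → ∀ s : ℝ, Qg u s = u⁻¹ • (γ (s + u) - γ s) := by
    intro u hu s
    have h1 : Qg u s = ∫ σ in (0:ℝ)..1, g (u * σ + s) := by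
      apply intervalIntegral.integral_congr
      intro σ _
      congr 1
      ring
    rw [h1, intervalIntegral.integral_comp_mul_add g hu s]
    rw [mul_zero, zero_add, mul_one]
    rw [show (∫ x in s..(u + s), g x) = γ (u + s) - γ s from
      intervalIntegral.integral_deriv_eq_sub (fun x _ => hγdiff x)
        (hgc.intervalIntegrable _ _)]
    rw [add_comm u s]
  have keyg2 : ∀ u : ℝ, u ≠ 0 → ∀ s : ℝ, Qg2 u s = u⁻¹ • (g (s + u) - g s) := by
    intro u hu s
    have h1 : Qg2 u s = ∫ σ in (0:ℝ)..1, g2 (u * σ + s) := by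
      apply intervalIntegral.integral_congr
      intro σ _
      congr 1
      ring
    rw [h1, intervalIntegral.integral_comp_mul_add g2 hu s]
    rw [mul_zero, zero_add, mul_one]
    rw [show (∫ x in s..(u + s), g2 x) = g (u + s) - g s from
      intervalIntegral.integral_deriv_eq_sub (fun x _ => hgdiff x)
        (hg2c.intervalIntegrable _ _)]
    rw [add_comm u s]
  have key0g : ∀ s, Qg 0 s = g s := by
    intro s; simp [hQg]
  have key0g2 : ∀ s, Qg2 0 s = g2 s := by
    intro s; simp [hQg2]
  -- nonvanishing
  have hQgne : ∀ u ∈ Set.Icc (0:ℝ) 1, ∀ s, Qg u s ≠ 0 := by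
    rintro u ⟨hu0, hu1⟩ s
    rcases eq_or_ne u 0 with rfl | hu
    · rw [key0g]; exact hne s
    rcases eq_or_ne u 1 with rfl | hu1'
    · rw [keyg 1 one_ne_zero s]
      rw [show γ (s + 1) - γ s = 1 by rw [hγper]; ring]
      simp
    · rw [keyg u hu s]
      have hμ : γ (s + u) - γ s ≠ 0 := by
        intro h
        obtain ⟨m, hm⟩ := hinj (s + u) s ⟨0, by simpa using h⟩
        have hum : u = (m : ℝ) := by linarith [hm]
        have hzr : (0:ℝ) < (m:ℝ) := by
          rw [← hum]; exact lt_of_le_of_ne hu0 (Ne.symm hu)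
        have hor : (m:ℝ) < 1 := by
          rw [← hum]; exact lt_of_le_of_ne hu1 hu1'
        have hz : (0:ℤ) < m := by exact_mod_cast hzr
        have ho : m < (1:ℤ) := by exact_mod_cast hor
        omega
      exact smul_ne_zero (inv_ne_zero hu) hμ
  -- joint continuity
  have hQgcj : Continuous (fun p : ℝ × ℝ => Qg p.1 p.2) := by
    apply intervalIntegral.continuous_parametric_intervalIntegral_of_continuous'
      (f := fun (p : ℝ × ℝ) (σ : ℝ) => g (p.2 + σ * p.1))
    exact hgc.comp (by fun_prop)
  have hQg2cj : Continuous (fun p : ℝ × ℝ => Qg2 p.1 p.2) := by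
    apply intervalIntegral.continuous_parametric_intervalIntegral_of_continuous'
      (f := fun (p : ℝ × ℝ) (σ : ℝ) => g2 (p.2 + σ * p.1))
    exact hg2c.comp (by fun_prop)
  -- clamp
  set c : ℝ → ℝ := fun u => max 0 (min 1 u) with hcdef
  have hcc : Continuous c := continuous_const.max (continuous_const.min continuous_id)
  have hcmem : ∀ u, c u ∈ Set.Icc (0:ℝ) 1 :=
    fun u => ⟨le_max_left _ _, max_le (by norm_num) (min_le_left _ _)⟩
  have hc0 : c 0 = 0 := by simp [hcdef]
  have hc1 : c 1 = 1 := by simp [hcdef]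
  set φ : ℝ → ℂ := fun u => ∫ s in (0:ℝ)..1, Qg2 (c u) s / Qg (c u) s with hφ
  have hφc : Continuous φ := by
    apply intervalIntegral.continuous_parametric_intervalIntegral_of_continuous'
      (f := fun (u : ℝ) (s : ℝ) => Qg2 (c u) s / Qg (c u) s)
    have h1 : Continuous fun q : ℝ × ℝ => Qg2 (c q.1) q.2 :=
      hQg2cj.comp ((hcc.comp continuous_fst).prodMk continuous_snd)
    have h2 : Continuous fun q : ℝ × ℝ => Qg (c q.1) q.2 :=
      hQgcj.comp ((hcc.comp continuous_fst).prodMk continuous_snd)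
    exact h1.div h2 (fun q => hQgne _ (hcmem _) _)
  have hφint : ∀ u, ∃ n : ℤ, φ u = (n : ℂ) * (2 * Real.pi * Complex.I) := by
    intro u
    obtain ⟨hcu0, hcu1⟩ := hcmem u
    have hd : ∀ s, HasDerivAt (fun s => Qg (c u) s) (Qg2 (c u) s) s := by
      intro s
      rcases eq_or_ne (c u) 0 with hv | hv
      · have e1 : (fun s => Qg (c u) s) = g := by
          funext x; rw [hv, key0g]
        rw [e1, hv, key0g2]
        exact hgd s
      · have e1 : (fun s => Qg (c u) s) = fun s => (c u)⁻¹ • (γ (s + c u) - γ s) :=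
          funext (keyg (c u) hv)
        rw [e1, keyg2 (c u) hv s]
        have h1 : HasDerivAt (fun s : ℝ => γ (s + c u)) (g (s + c u)) s :=
          HasDerivAt.comp_add_const s (c u) (hγd (s + c u))
        exact (h1.sub (hγd s)).const_smul ((c u)⁻¹)
    have hLc' : Continuous fun s => Qg2 (c u) s :=
      hQg2cj.comp (continuous_const.prodMk continuous_id)
    have hne' : ∀ s, Qg (c u) s ≠ 0 := hQgne _ ⟨hcu0, hcu1⟩
    have hper' : Qg (c u) 1 = Qg (c u) 0 := by
      show (∫ σ in (0:ℝ)..1, g (1 + σ * c u)) = ∫ σ in (0:ℝ)..1, g (0 + σ * c u)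
      apply intervalIntegral.integral_congr
      intro σ _
      show g (1 + σ * c u) = g (0 + σ * c u)
      have e : (1:ℝ) + σ * c u = (0 + σ * c u) + 1 := by ring
      rw [e, hgper]
    exact loop_winding (fun s => Qg (c u) s) (fun s => Qg2 (c u) s) hd hLc' hne' hper'
  have hφ1 : φ 1 = 0 := by
    have hz : ∀ s : ℝ, Qg2 (c 1) s = 0 := by
      intro s
      rw [hc1, keyg2 1 one_ne_zero s, hgper s]
      simp
    show (∫ s in (0:ℝ)..1, Qg2 (c 1) s / Qg (c 1) s) = 0
    rw [show (∫ s in (0:ℝ)..1, Qg2 (c 1) s / Qg (c 1) s) = ∫ s in (0:ℝ)..1, (0:ℂ) from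
      intervalIntegral.integral_congr (fun s _ => by
        show Qg2 (c 1) s / Qg (c 1) s = 0
        rw [hz s, zero_div])]
    simp
  have hφ0 : φ 0 = ∫ t in (0:ℝ)..1, g2 t / g t := by
    show (∫ s in (0:ℝ)..1, Qg2 (c 0) s / Qg (c 0) s) = _
    apply intervalIntegral.integral_congr
    intro s _
    show Qg2 (c 0) s / Qg (c 0) s = g2 s / g s
    rw [hc0, key0g, key0g2]
  have := const_lattice φ hφc hφint
  rw [hφ0, hφ1] at this
  exact this

theorem stmt2
    (W : ℂ → ℂ) (hW : Differentiable ℂ W) (hWper : ∀ z, W (z + 1) = W z)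
    (γ : ℝ → ℂ) (hγ : ContDiff ℝ (⊤ : ℕ∞) γ)
    (hγper : ∀ t : ℝ, γ (t + 1) = γ t + 1)
    (hinj : ∀ s t : ℝ, (∃ m : ℤ, γ s - γ t = (m : ℂ)) → ∃ m : ℤ, s - t = (m : ℝ))
    (hstokes : ∀ t : ℝ, ∃ r : ℝ, 0 < r ∧ W (γ t) * deriv γ t = (r : ℂ)) :
    (∫ t in (0:ℝ)..1, deriv W (γ t) * deriv γ t / W (γ t)) = 0 := by
  have hne : ∀ t, deriv γ t ≠ 0 := by
    intro t h
    obtain ⟨r, hr, he⟩ := hstokes t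
    rw [h, mul_zero] at he
    exact hr.ne' (by exact_mod_cast he.symm)
  have hWne : ∀ t, W (γ t) ≠ 0 := by
    intro t h
    obtain ⟨r, hr, he⟩ := hstokes t
    rw [h, zero_mul] at he
    exact hr.ne' (by exact_mod_cast he.symm)
  have hγi : ContDiff ℝ ∞ γ := hγ
  obtain ⟨hγdiff, hgc'⟩ := contDiff_infty_iff_deriv.mp hγi
  obtain ⟨hgdiff, hg2c'⟩ := contDiff_infty_iff_deriv.mp hgc'
  have hγd : ∀ t, HasDerivAt γ (deriv γ t) t := fun t => (hγdiff t).hasDerivAt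
  have hgd : ∀ t, HasDerivAt (deriv γ) (deriv (deriv γ) t) t := fun t => (hgdiff t).hasDerivAt
  have hgc : Continuous (deriv γ) := hgc'.continuous
  have hg2c : Continuous (deriv (deriv γ)) := hg2c'.continuous
  have hWsm : ContDiff ℂ ∞ W := hW.contDiff
  have hW'c : Continuous (deriv W) := (contDiff_infty_iff_deriv.mp hWsm).2.continuous
  have hWγd : ∀ t, HasDerivAt (fun t => W (γ t)) (deriv W (γ t) * deriv γ t) t := by
    intro t
    exact HasDerivAt.comp t ((hW (γ t)).hasDerivAt) (hγd t)
  have hρd : ∀ t, HasDerivAt (fun t => W (γ t) * deriv γ t)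
      (deriv W (γ t) * deriv γ t * deriv γ t + W (γ t) * deriv (deriv γ) t) t :=
    fun t => (hWγd t).mul (hgd t)
  have hρc : Continuous (fun t => W (γ t) * deriv γ t) :=
    (hW.continuous.comp hγ.continuous).mul hgc
  have hρ'c : Continuous (fun t =>
      deriv W (γ t) * deriv γ t * deriv γ t + W (γ t) * deriv (deriv γ) t) := by
    apply Continuous.add
    · exact ((hW'c.comp hγ.continuous).mul hgc).mul hgc
    · exact (hW.continuous.comp hγ.continuous).mul hg2c
  have hρne : ∀ t, W (γ t) * deriv γ t ≠ 0 := fun t => mul_ne_zero (hWne t) (hne t)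
  have hρ1 : W (γ 1) * deriv γ 1 = W (γ 0) * deriv γ 0 := by
    have h1 : γ 1 = γ 0 + 1 := by
      have := hγper 0; rwa [zero_add] at this
    have h2 : deriv γ 1 = deriv γ 0 := by
      have := deriv_per γ hγper 0; rwa [zero_add] at this
    rw [h1, h2, hWper]
  have hψd : ∀ t, HasDerivAt (fun t => Complex.log (W (γ t) * deriv γ t))
      ((deriv W (γ t) * deriv γ t * deriv γ t + W (γ t) * deriv (deriv γ) t)
        / (W (γ t) * deriv γ t)) t := by
    intro t
    apply (hρd t).clog_real
    obtain ⟨r, hr, he⟩ := hstokes t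
    rw [he]
    exact Complex.ofReal_mem_slitPlane.mpr hr
  have hint1 : (∫ t in (0:ℝ)..1,
      (deriv W (γ t) * deriv γ t * deriv γ t + W (γ t) * deriv (deriv γ) t)
        / (W (γ t) * deriv γ t)) = 0 := by
    rw [intervalIntegral.integral_eq_sub_of_hasDerivAt (fun t _ => hψd t)
      ((hρ'c.div hρc hρne).intervalIntegrable _ _)]
    rw [hρ1, sub_self]
  have hint2 : (∫ t in (0:ℝ)..1, deriv (deriv γ) t / deriv γ t) = 0 :=
    winding_zero γ hγ hγper hinj hne
  have hsplit : (∫ t in (0:ℝ)..1, deriv W (γ t) * deriv γ t / W (γ t))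
      = (∫ t in (0:ℝ)..1,
          ((deriv W (γ t) * deriv γ t * deriv γ t + W (γ t) * deriv (deriv γ) t)
            / (W (γ t) * deriv γ t) - deriv (deriv γ) t / deriv γ t)) := by
    apply intervalIntegral.integral_congr
    intro t _
    have h1 := hWne t
    have h2 := hne t
    field_simp
    ring
  have hi1 : IntervalIntegrable (fun t =>
      (deriv W (γ t) * deriv γ t * deriv γ t + W (γ t) * deriv (deriv γ) t)
        / (W (γ t) * deriv γ t)) MeasureTheory.volume 0 1 :=
    Continuous.intervalIntegrable (hρ'c.div hρc hρne) _ _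
  have hi2 : IntervalIntegrable (fun t => deriv (deriv γ) t / deriv γ t)
      MeasureTheory.volume 0 1 :=
    Continuous.intervalIntegrable (Continuous.div hg2c hgc hne) _ _
  rw [hsplit, intervalIntegral.integral_sub hi1 hi2, hint1, hint2, sub_zero]
end
end

section
/- Let L > 0 and let ρ : ℝ → ℂ be a smooth map with |ρ′(t)| = 1 for all t, ρ(t + L) = ρ(t) + 1 for all t, and such that ρ(s) − ρ(t) ∈ ℤ implies s − t ∈ Lℤ (so ρ descends to a non-self-intersecting closed unit-speed curve on the cylinder ℂ/ℤ winding once around it). Then ∫₀^L ρ″(s)/ρ′(s) ds = 0; equivalently, the closed curve s ↦ ρ′(s), s ∈ [0,L], has winding number 0 around the origin. -/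
noncomputable section

open Complex

namespace Stmt3Helper

lemma exp_integral_logDeriv {f f' : ℝ → ℂ} (hf : ∀ t, HasDerivAt f (f' t) t)
    (hf' : Continuous f') (hne : ∀ t, f t ≠ 0) (b : ℝ) :
    Complex.exp (∫ t in (0:ℝ)..b, f' t / f t) = f b / f 0 := by
  have hfc : Continuous f := by
    have : Differentiable ℝ f := fun t => (hf t).differentiableAt
    exact this.continuous
  set g : ℝ → ℂ := fun t => f' t / f t with hg
  have hgc : Continuous g := hf'.div hfc hne
  set φ : ℝ → ℂ := fun x => ∫ t in (0:ℝ)..x, g t with hφdef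
  have hφ : ∀ x, HasDerivAt φ (g x) x := fun x =>
    (hgc.integral_hasStrictDerivAt 0 x).hasDerivAt
  set F : ℝ → ℂ := fun x => Complex.exp (-φ x) * f x with hF
  have hFd : ∀ x, HasDerivAt F 0 x := by
    intro x
    have h1 : HasDerivAt (fun x => Complex.exp (-φ x)) (Complex.exp (-φ x) * (-g x)) x :=
      (hφ x).neg.cexp
    have h2 := h1.mul (hf x)
    have h3 : Complex.exp (-φ x) * -g x * f x + Complex.exp (-φ x) * f' x = 0 := by
      simp only [hg]
      field_simp [hne x]
      ring
    rwa [h3] at h2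
  have hdiff : Differentiable ℝ F := fun x => (hFd x).differentiableAt
  have hcst : F b = F 0 := is_const_of_deriv_eq_zero hdiff (fun x => (hFd x).deriv) b 0
  have hφ0 : φ 0 = 0 := intervalIntegral.integral_same
  rw [hF] at hcst
  simp only [hφ0, neg_zero, Complex.exp_zero, one_mul] at hcst
  rw [eq_div_iff (hne 0), ← hcst, ← mul_assoc, ← Complex.exp_add]
  rw [add_neg_cancel, Complex.exp_zero, one_mul]

end Stmt3Helper

theorem stmt3
    (L : ℝ) (hL : 0 < L) (ρ : ℝ → ℂ) (hρ : ContDiff ℝ (⊤ : ℕ∞) ρ)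
    (hunit : ∀ t : ℝ, ‖deriv ρ t‖ = 1)
    (hper : ∀ t : ℝ, ρ (t + L) = ρ t + 1)
    (hinj : ∀ s t : ℝ, (∃ m : ℤ, ρ s - ρ t = (m : ℂ)) → ∃ m : ℤ, s - t = (m : ℝ) * L) :
    (∫ s in (0:ℝ)..L, deriv (deriv ρ) s / deriv ρ s) = 0 := by
  have hd1 : Differentiable ℝ ρ := hρ.differentiable (by simp)
  have h1 : ContDiff ℝ (⊤ : ℕ∞) (deriv ρ) := (contDiff_infty_iff_deriv.mp hρ).2
  have hd2 : Differentiable ℝ (deriv ρ) := h1.differentiable (by simp)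
  have hc1 : Continuous (deriv ρ) := hd2.continuous
  have hc2 : Continuous (deriv (deriv ρ)) :=
    ((contDiff_infty_iff_deriv.mp h1).2).continuous
  -- periodicity of deriv ρ
  have hper' : ∀ t : ℝ, deriv ρ (t + L) = deriv ρ t := by
    intro t
    have hfe : (fun t => ρ (t + L)) = fun t => ρ t + 1 := funext hper
    calc deriv ρ (t + L) = deriv (fun t => ρ (t + L)) t := (deriv_comp_add_const ρ L t).symm
      _ = deriv (fun t => ρ t + 1) t := by rw [hfe]
      _ = deriv ρ t := by simp
  -- ρ shifted by natural multiples of L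
  have hpern : ∀ (n : ℕ) (t : ℝ), ρ (t + (n : ℝ) * L) = ρ t + (n : ℂ) := by
    intro n
    induction n with
    | zero => simp
    | succ k ih =>
        intro t
        have e : t + ((k + 1 : ℕ) : ℝ) * L = (t + (k : ℝ) * L) + L := by push_cast; ring
        rw [e, hper, ih]
        push_cast; ring
  -- ρ shifted by integer multiples of L
  have hperm : ∀ (m : ℤ) (t : ℝ), ρ (t + (m : ℝ) * L) = ρ t + (m : ℂ) := by
    intro m t
    rcases le_or_gt 0 m with hm | hm
    · lift m to ℕ using hm
      have := hpern m t
      push_cast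
      push_cast at this
      exact this
    · obtain ⟨n, rfl⟩ : ∃ n : ℕ, m = -(n : ℤ) := ⟨m.natAbs, by omega⟩
      have h := hpern n (t + ((-(n : ℤ) : ℤ) : ℝ) * L)
      have e : t + ((-(n : ℤ) : ℤ) : ℝ) * L + (n : ℝ) * L = t := by push_cast; ring
      rw [e] at h
      have := h.symm
      push_cast
      push_cast at this ⊢
      linear_combination this
  -- the averaged secant maps
  set Q : ℝ × ℝ → ℂ := fun x => ∫ u in (0:ℝ)..1, deriv ρ (x.2 + u * x.1) with hQ
  set P : ℝ × ℝ → ℂ := fun x => ∫ u in (0:ℝ)..1, deriv (deriv ρ) (x.2 + u * x.1) with hP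
  have hQcont : Continuous Q := by
    apply intervalIntegral.continuous_parametric_intervalIntegral_of_continuous'
      (f := fun (x : ℝ × ℝ) (u : ℝ) => deriv ρ (x.2 + u * x.1)) ?_ 0 1
    exact hc1.comp (by fun_prop)
  have hPcont : Continuous P := by
    apply intervalIntegral.continuous_parametric_intervalIntegral_of_continuous'
      (f := fun (x : ℝ × ℝ) (u : ℝ) => deriv (deriv ρ) (x.2 + u * x.1)) ?_ 0 1
    exact hc2.comp (by fun_prop)
  -- explicit formulas
  have hQform : ∀ ε t : ℝ, ε ≠ 0 → Q (ε, t) = (ε : ℂ)⁻¹ * (ρ (t + ε) - ρ t) := by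
    intro ε t hε
    have e : (fun u : ℝ => deriv ρ (t + u * ε)) = fun u : ℝ => deriv ρ (ε * u + t) := by
      funext u; ring_nf
    simp only [hQ]
    rw [e, intervalIntegral.integral_comp_mul_add (deriv ρ) hε t]
    rw [mul_zero, zero_add, mul_one]
    rw [intervalIntegral.integral_deriv_eq_sub (fun x _ => hd1 x)
      (hc1.intervalIntegrable _ _)]
    rw [Complex.real_smul]
    push_cast
    rw [add_comm ε t]
  have hPform : ∀ ε t : ℝ, ε ≠ 0 →
      P (ε, t) = (ε : ℂ)⁻¹ * (deriv ρ (t + ε) - deriv ρ t) := by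
    intro ε t hε
    have e : (fun u : ℝ => deriv (deriv ρ) (t + u * ε))
        = fun u : ℝ => deriv (deriv ρ) (ε * u + t) := by
      funext u; ring_nf
    simp only [hP]
    rw [e, intervalIntegral.integral_comp_mul_add (deriv (deriv ρ)) hε t]
    rw [mul_zero, zero_add, mul_one]
    rw [intervalIntegral.integral_deriv_eq_sub (fun x _ => hd2 x)
      (hc2.intervalIntegrable _ _)]
    rw [Complex.real_smul]
    push_cast
    rw [add_comm ε t]
  have hQ0 : ∀ t : ℝ, Q (0, t) = deriv ρ t := by
    intro t; simp [hQ]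
  have hP0 : ∀ t : ℝ, P (0, t) = deriv (deriv ρ) t := by
    intro t; simp [hP]
  -- Q never vanishes
  have hQne : ∀ ε t : ℝ, Q (ε, t) ≠ 0 := by
    intro ε t
    rcases eq_or_ne ε 0 with rfl | hε
    · rw [hQ0]
      intro h
      have := hunit t
      rw [h] at this
      simp at this
    · rw [hQform ε t hε]
      refine mul_ne_zero (inv_ne_zero (by exact_mod_cast hε)) ?_
      intro h
      have h0 : ρ (t + ε) - ρ t = ((0 : ℤ) : ℂ) := by simpa using h
      obtain ⟨m, hm⟩ := hinj (t + ε) t ⟨0, h0⟩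
      have hε' : ε = (m : ℝ) * L := by linarith [hm]
      have := hperm m t
      rw [← hε'] at this
      rw [this] at h0
      have hm0 : (m : ℂ) = 0 := by
        push_cast at h0 ⊢
        linear_combination h0
      have : m = 0 := by exact_mod_cast hm0
      rw [this] at hε'
      simp at hε'
      exact hε hε'
  -- Q is L-periodic in t
  have hQper : ∀ ε t : ℝ, Q (ε, t + L) = Q (ε, t) := by
    intro ε t
    simp only [hQ]
    have e : (fun u : ℝ => deriv ρ (t + L + u * ε)) = fun u : ℝ => deriv ρ (t + u * ε) := by
      funext u
      rw [show t + L + u * ε = (t + u * ε) + L by ring, hper']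
    rw [e]
  -- derivative of Q in t is P
  have hQder : ∀ ε t : ℝ, HasDerivAt (fun s => Q (ε, s)) (P (ε, t)) t := by
    intro ε t
    rcases eq_or_ne ε 0 with rfl | hε
    · have e : (fun s => Q (0, s)) = deriv ρ := funext hQ0
      rw [e, hP0 t]
      exact (hd2 t).hasDerivAt
    · have e : (fun s => Q (ε, s)) = fun s => (ε : ℂ)⁻¹ * (ρ (s + ε) - ρ s) :=
        funext fun s => hQform ε s hε
      rw [e, hPform ε t hε]
      have h1 : HasDerivAt (fun s : ℝ => ρ (s + ε)) (deriv ρ (t + ε)) t :=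
        (hd1 (t + ε)).hasDerivAt.comp_add_const t ε
      have h2 : HasDerivAt ρ (deriv ρ t) t := (hd1 t).hasDerivAt
      exact (h1.sub h2).const_mul _
  -- the winding integral
  set N : ℝ → ℂ := fun ε => ∫ t in (0:ℝ)..L, P (ε, t) / Q (ε, t) with hN
  have hNcont : Continuous N := by
    apply intervalIntegral.continuous_parametric_intervalIntegral_of_continuous'
      (f := fun (ε : ℝ) (t : ℝ) => P (ε, t) / Q (ε, t)) ?_ 0 L
    exact (hPcont.comp (by fun_prop)).div (hQcont.comp (by fun_prop))
      (fun x => hQne x.1 x.2)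
  have hNint : ∀ ε : ℝ, ∃ n : ℤ, N ε = n * (2 * Real.pi * I) := by
    intro ε
    rw [← Complex.exp_eq_one_iff]
    have hc : Continuous fun t => P (ε, t) := hPcont.comp (by fun_prop)
    have := Stmt3Helper.exp_integral_logDeriv (f := fun t => Q (ε, t))
      (f' := fun t => P (ε, t)) (hQder ε) hc (fun t => hQne ε t) L
    rw [hN]
    simp only
    rw [this]
    rw [show (L : ℝ) = 0 + L by ring, hQper ε 0]
    exact div_self (hQne ε 0)
  have hNL : N L = 0 := by
    have hz : ∀ t : ℝ, P (L, t) / Q (L, t) = 0 := by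
      intro t
      rw [hPform L t hL.ne']
      rw [hper' t]
      simp
    rw [hN]
    simp only
    rw [show (fun t => P (L, t) / Q (L, t)) = fun _ : ℝ => (0 : ℂ) from funext hz]
    simp
  have hN0 : N 0 = ∫ s in (0:ℝ)..L, deriv (deriv ρ) s / deriv ρ s := by
    rw [hN]
    simp only
    congr 1
    funext t
    rw [hP0, hQ0]
  -- integer-valuedness + continuity ⟹ N 0 = N L = 0
  rw [← hN0]
  obtain ⟨n₀, hn₀⟩ := hNint 0
  by_contra hne0
  have hn0ne : n₀ ≠ 0 := by
    rintro rfl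
    simp at hn₀
    exact hne0 hn₀
  set h : ℝ → ℝ := fun ε => |(N ε).im| with hh
  have hhc : Continuous h := (Complex.continuous_im.comp hNcont).abs
  have him : ∀ m : ℤ, ((m : ℂ) * (2 * (Real.pi : ℂ) * I)).im = (m : ℝ) * (2 * Real.pi) := by
    intro m
    simp [Complex.mul_im]
  have hint : ∀ ε : ℝ, ∃ n : ℕ, h ε = (n : ℝ) * (2 * Real.pi) := by
    intro ε
    obtain ⟨m, hm⟩ := hNint ε
    refine ⟨m.natAbs, ?_⟩
    rw [hh]
    simp only
    rw [hm, him m, abs_mul, abs_of_pos (by positivity : (0:ℝ) < 2 * Real.pi)]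
    rw [Nat.cast_natAbs, Int.cast_abs]
  have hL0 : h L = 0 := by rw [hh]; simp [hNL]
  have h0big : 2 * Real.pi ≤ h 0 := by
    rw [hh]
    simp only
    rw [hn₀, him n₀, abs_mul, abs_of_pos (by positivity : (0:ℝ) < 2 * Real.pi)]
    have : (1 : ℝ) ≤ |(n₀ : ℝ)| := by
      rw [← Int.cast_abs]
      exact_mod_cast Int.one_le_abs hn0ne
    nlinarith [Real.pi_pos]
  have hmem : Real.pi ∈ Set.Icc (h L) (h 0) := by
    constructor
    · rw [hL0]; exact Real.pi_pos.le
    · linarith [Real.pi_pos]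
  obtain ⟨ε, _, hε⟩ := intermediate_value_Icc' hL.le hhc.continuousOn hmem
  obtain ⟨n, hn⟩ := hint ε
  rw [hε] at hn
  rcases Nat.eq_zero_or_pos n with rfl | hnpos
  · simp at hn
  · have : (1 : ℝ) ≤ (n : ℝ) := by exact_mod_cast hnpos
    nlinarith [Real.pi_pos]

end
end

section
/- Let W : ℂ → ℂ be entire, C₀ ≥ 1, and let γ : [0,1] → ℂ be smooth with γ′(t) ≠ 0 and W(γ(t)) ≠ 0 for all t. Let Φ be a holomorphic antiderivative of W on a neighbourhood of γ([0,1]) (Φ′ = W). Then there exists a constant C > 0, depending only on γ, W and C₀, such that for every h > 0, every α ∈ ℂ with C₀⁻¹ ≤ |α| ≤ C₀, and every function u holomorphic on a neighbourhood of γ([0,1]) satisfying −h²u″(z) = α²W(z)²u(z) there, the vector 𝐮(z) := (u(z), −ih u′(z)) ∈ ℂ² satisfies, for all t ∈ [0,1], |𝐮(γ(t))| ≤ C·exp(h⁻¹∫₀ᵗ |ψ′(s)| ds)·|𝐮(γ(0))|, where ψ(t) := Im(α·Φ(γ(t))). -/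
noncomputable section

open Complex

private lemma comp_gamma' {g : ℂ → ℂ} {g' : ℂ} {γ : ℝ → ℂ} {γ' : ℂ} {t : ℝ}
    (hg : HasDerivAt g g' (γ t)) (hγ : HasDerivAt γ γ' t) :
    HasDerivAt (fun r => g (γ r)) (γ' * g') t := by
  simpa [Function.comp_def, smul_eq_mul] using hg.scomp t hγ

private lemma hasDerivAt_normSq' {f : ℝ → ℂ} {f' : ℂ} {t : ℝ} (hf : HasDerivAt f f' t) :
    HasDerivAt (fun r => ‖f r‖ ^ 2) (2 * (f' * (starRingEnd ℂ) (f t)).re) t := by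
  have h1 : HasDerivAt (fun r => (f r).re) f'.re t :=
    Complex.reCLM.hasFDerivAt.comp_hasDerivAt t hf
  have h2 : HasDerivAt (fun r => (f r).im) f'.im t :=
    Complex.imCLM.hasFDerivAt.comp_hasDerivAt t hf
  have h3 : HasDerivAt (fun r => (f r).re ^ 2 + (f r).im ^ 2) _ t := (h1.pow 2).add (h2.pow 2)
  have heq : (fun r => (f r).re ^ 2 + (f r).im ^ 2) = fun r => ‖f r‖ ^ 2 := by
    funext r
    rw [Complex.sq_norm, Complex.normSq_apply]
    ring
  rw [heq] at h3
  convert h3 using 1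
  simp [Complex.mul_re, Complex.conj_re, Complex.conj_im]
  ring

private lemma gronwall_aux' {S : Set ℝ} (hIcc : Set.Icc (0:ℝ) 1 ⊆ S)
    {G G' k : ℝ → ℝ} (hk : Continuous k)
    (hG : ∀ s ∈ S, HasDerivAt G (G' s) s)
    (hbound : ∀ s ∈ Set.Icc (0:ℝ) 1, G' s ≤ 2 * k s * G s) :
    ∀ t ∈ Set.Icc (0:ℝ) 1, G t ≤ G 0 * Real.exp (2 * ∫ s in (0:ℝ)..t, k s) := by
  intro t ht
  set K : ℝ → ℝ := fun t => ∫ s in (0:ℝ)..t, k s with hK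
  have hKd : ∀ s : ℝ, HasDerivAt K (k s) s := fun s =>
    intervalIntegral.integral_hasDerivAt_right (hk.intervalIntegrable 0 s)
      (hk.stronglyMeasurableAtFilter _ _) hk.continuousAt
  set H : ℝ → ℝ := fun t => G t * Real.exp (-2 * K t) with hH
  have hHd : ∀ s ∈ S, HasDerivAt H
      (G' s * Real.exp (-2 * K s) + G s * (Real.exp (-2 * K s) * (-2 * k s))) s := by
    intro s hs
    exact (hG s hs).mul (((hKd s).const_mul (-2)).exp)
  have hmono : AntitoneOn H (Set.Icc (0:ℝ) 1) := by
    apply antitoneOn_of_deriv_nonpos (convex_Icc 0 1)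
    · exact fun s hs => ((hHd s (hIcc hs)).continuousAt).continuousWithinAt
    · intro s hs
      rw [interior_Icc] at hs
      exact ((hHd s (hIcc (Set.Ioo_subset_Icc_self hs))).differentiableAt).differentiableWithinAt
    · intro s hs
      rw [interior_Icc] at hs
      have hs'' : s ∈ Set.Icc (0:ℝ) 1 := Set.Ioo_subset_Icc_self hs
      rw [(hHd s (hIcc hs'')).deriv]
      have := hbound s hs''
      nlinarith [Real.exp_pos (-2 * K s)]
  have h0 : H t ≤ H 0 := hmono (by constructor <;> norm_num) ht ht.1
  have hK0 : K 0 = 0 := by simp [hK]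
  rw [hH] at h0
  simp only [hK0, mul_zero, Real.exp_zero, mul_one] at h0
  have := mul_le_mul_of_nonneg_right h0 (le_of_lt (Real.exp_pos (2 * K t)))
  rw [mul_assoc, ← Real.exp_add] at this
  simpa using this

private lemma key_re_bound (μ ρ P : ℂ) :
    ((μ * P + ρ) * (starRingEnd ℂ) P).re ≤ μ.re * ‖P‖ ^ 2 + ‖ρ‖ * ‖P‖ := by
  have h1 : (μ * P + ρ) * (starRingEnd ℂ) P
      = μ * (P * (starRingEnd ℂ) P) + ρ * (starRingEnd ℂ) P := by ring
  rw [h1, Complex.mul_conj]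
  have h2 : (μ * (Complex.normSq P : ℂ)).re = μ.re * ‖P‖ ^ 2 := by
    rw [Complex.mul_re]
    simp [Complex.sq_norm]
  rw [Complex.add_re, h2]
  have h3 : (ρ * (starRingEnd ℂ) P).re ≤ ‖ρ‖ * ‖P‖ := by
    calc (ρ * (starRingEnd ℂ) P).re ≤ ‖ρ * (starRingEnd ℂ) P‖ := Complex.re_le_norm _
      _ = ‖ρ‖ * ‖P‖ := by rw [norm_mul, RCLike.norm_conj]
  linarith

private lemma arith1 {P Q A k0h MM d X Y : ℝ} (hP : 0 ≤ P) (hQ : 0 ≤ Q) (hA : 0 ≤ A)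
    (hk : 0 ≤ k0h) (hM : 0 ≤ MM) (hd : 0 < d)
    (hX : X ≤ k0h * P ^ 2 + MM * A * P) (hY : Y ≤ k0h * Q ^ 2 + MM * A * Q)
    (hab : 2 * d * A ≤ P + Q) :
    2 * X + 2 * Y ≤ 2 * (k0h + MM / d) * (P ^ 2 + Q ^ 2) := by
  have h1 : A * (P + Q) ≤ (P ^ 2 + Q ^ 2) / d := by
    rw [le_div_iff₀ hd]
    nlinarith [sq_nonneg (P - Q)]
  have h2 : MM * (A * (P + Q)) ≤ MM * ((P ^ 2 + Q ^ 2) / d) :=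
    mul_le_mul_of_nonneg_left h1 hM
  have h3 : MM * ((P ^ 2 + Q ^ 2) / d) = MM / d * (P ^ 2 + Q ^ 2) := by ring
  nlinarith [h2]

private lemma arith2 {x y c : ℝ} (hx : 0 ≤ x) (hy : 0 ≤ y) (hxc : x ≤ c) (hyc : y ≤ c) :
    x ^ 2 + y ^ 2 ≤ 2 * c ^ 2 := by nlinarith

private lemma arith3 (x y : ℝ) : (x + y) ^ 2 ≤ 2 * (x ^ 2 + y ^ 2) := by
  nlinarith [sq_nonneg (x - y)]

set_option maxHeartbeats 1000000 in
theorem stmt4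
    (W : ℂ → ℂ) (hW : Differentiable ℂ W)
    (C0 : ℝ) (hC0 : 1 ≤ C0)
    (γ : ℝ → ℂ) (hγ : ContDiff ℝ (⊤ : ℕ∞) γ)
    (hγ' : ∀ t ∈ Set.Icc (0:ℝ) 1, deriv γ t ≠ 0)
    (hWγ : ∀ t ∈ Set.Icc (0:ℝ) 1, W (γ t) ≠ 0)
    (Φ : ℂ → ℂ) (U : Set ℂ) (hU : IsOpen U) (hγU : γ '' Set.Icc (0:ℝ) 1 ⊆ U)
    (hΦ : ∀ z ∈ U, HasDerivAt Φ (W z) z) :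
    ∃ C > (0:ℝ), ∀ h : ℝ, 0 < h → ∀ α : ℂ,
      C0⁻¹ ≤ ‖α‖ → ‖α‖ ≤ C0 →
      ∀ O : Set ℂ, IsOpen O → γ '' Set.Icc (0:ℝ) 1 ⊆ O →
      ∀ u : ℂ → ℂ, DifferentiableOn ℂ u O →
        (∀ z ∈ O, -(h : ℂ) ^ 2 * deriv (deriv u) z = α ^ 2 * (W z) ^ 2 * u z) →
        ∀ t ∈ Set.Icc (0:ℝ) 1,
          ‖(u (γ t), -Complex.I * (h : ℂ) * deriv u (γ t))‖ ≤
            C * Real.exp (h⁻¹ *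
                ∫ s in (0:ℝ)..t, |deriv (fun r : ℝ => (α * Φ (γ r)).im) s|) *
              ‖(u (γ 0), -Complex.I * (h : ℂ) * deriv u (γ 0))‖ := by
  have hC0pos : (0:ℝ) < C0 := lt_of_lt_of_le one_pos hC0
  have hγc : Continuous γ := hγ.continuous
  have hγd : ∀ t : ℝ, HasDerivAt γ (deriv γ t) t :=
    fun t => ((hγ.differentiable (by simp)) t).hasDerivAt
  have hγ'c : Continuous (deriv γ) := hγ.continuous_deriv (by exact_mod_cast le_top)
  have hWc : Continuous W := hW.continuous
  have hWa : AnalyticOnNhd ℂ W Set.univ :=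
    hW.differentiableOn.analyticOnNhd isOpen_univ
  have hW'd : Differentiable ℂ (deriv W) := fun z =>
    ((hWa.deriv z (Set.mem_univ z)).differentiableAt)
  have hW'c : Continuous (deriv W) := hW'd.continuous
  have hJcomp : IsCompact (Set.Icc (0:ℝ) 1) := isCompact_Icc
  have hJne : (Set.Icc (0:ℝ) 1).Nonempty := ⟨0, by norm_num⟩
  -- minimum of ‖W ∘ γ‖
  obtain ⟨t₀, ht₀, hmin⟩ := hJcomp.exists_isMinOn hJne
    ((hWc.comp hγc).norm.continuousOn)
  set δW : ℝ := ‖W (γ t₀)‖ with hδWdef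
  have hδWpos : 0 < δW := norm_pos_iff.mpr (hWγ t₀ ht₀)
  have hδWle : ∀ s ∈ Set.Icc (0:ℝ) 1, δW ≤ ‖W (γ s)‖ := fun s hs => hmin hs
  -- maximum of ‖W ∘ γ‖
  obtain ⟨t₁, ht₁, hmax⟩ := hJcomp.exists_isMaxOn hJne
    ((hWc.comp hγc).norm.continuousOn)
  set MW : ℝ := ‖W (γ t₁)‖ with hMWdef
  have hMWnn : 0 ≤ MW := norm_nonneg _
  have hMWge : ∀ s ∈ Set.Icc (0:ℝ) 1, ‖W (γ s)‖ ≤ MW := fun s hs => hmax hs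
  -- maximum of ‖deriv γ‖ * ‖deriv W ∘ γ‖
  obtain ⟨t₂, ht₂, hmax₂⟩ := hJcomp.exists_isMaxOn hJne
    ((hγ'c.norm.mul ((hW'c.comp hγc).norm)).continuousOn)
  set MD : ℝ := ‖deriv γ t₂‖ * ‖deriv W (γ t₂)‖ with hMDdef
  have hMDnn : 0 ≤ MD := mul_nonneg (norm_nonneg _) (norm_nonneg _)
  have hMDge : ∀ s ∈ Set.Icc (0:ℝ) 1, ‖deriv γ s‖ * ‖deriv W (γ s)‖ ≤ MD :=
    fun s hs => hmax₂ hs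
  set δ : ℝ := C0⁻¹ * δW with hδdef
  have hδpos : 0 < δ := mul_pos (inv_pos.mpr hC0pos) hδWpos
  set Mm : ℝ := C0 * MW with hMmdef
  have hMmnn : 0 ≤ Mm := mul_nonneg hC0pos.le hMWnn
  set M : ℝ := C0 * MD with hMdef
  have hMnn : 0 ≤ M := mul_nonneg hC0pos.le hMDnn
  set B : ℝ := 1 / (2 * δ) + 1 / 2 with hBdef
  have hBpos : 0 < B := by positivity
  refine ⟨B * 2 * (1 + Mm) * Real.exp (M / δ), by positivity, ?_⟩
  intro h hh α hα1 hα2 O hO hγO u hu hueq t ht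
  have hhC : (h : ℂ) ≠ 0 := Complex.ofReal_ne_zero.mpr hh.ne'
  have hαn1 : C0⁻¹ ≤ ‖α‖ := hα1
  have hαn2 : ‖α‖ ≤ C0 := hα2
  -- the open set S in ℝ
  set S : Set ℝ := γ ⁻¹' O ∩ γ ⁻¹' U with hSdef
  have hJS : Set.Icc (0:ℝ) 1 ⊆ S := fun s hs =>
    ⟨hγO ⟨s, hs, rfl⟩, hγU ⟨s, hs, rfl⟩⟩
  have hSO : ∀ s ∈ S, γ s ∈ O := fun s hs => hs.1
  have hSU : ∀ s ∈ S, γ s ∈ U := fun s hs => hs.2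
  -- facts about u
  have huA : AnalyticOnNhd ℂ u O := hu.analyticOnNhd hO
  have hduD : DifferentiableOn ℂ (deriv u) O := (huA.deriv).differentiableOn
  have hud : ∀ z ∈ O, HasDerivAt u (deriv u z) z :=
    fun z hz => (hu.differentiableAt (hO.mem_nhds hz)).hasDerivAt
  have hdud : ∀ z ∈ O, HasDerivAt (deriv u) (deriv (deriv u) z) z :=
    fun z hz => (hduD.differentiableAt (hO.mem_nhds hz)).hasDerivAt
  have hddu : ∀ z ∈ O, deriv (deriv u) z = -(α ^ 2 * W z ^ 2 * u z) / (h:ℂ) ^ 2 := by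
    intro z hz
    have h2 : ((h:ℂ) ^ 2) ≠ 0 := pow_ne_zero _ hhC
    rw [eq_div_iff h2]
    linear_combination -(hueq z hz)
  -- the functions
  set fp : ℝ → ℂ := fun r => (h:ℂ) * deriv u (γ r) - Complex.I * (α * W (γ r) * u (γ r))
    with hfpdef
  set fm : ℝ → ℂ := fun r => (h:ℂ) * deriv u (γ r) + Complex.I * (α * W (γ r) * u (γ r))
    with hfmdef
  set μp : ℝ → ℂ := fun r => -(Complex.I * (deriv γ r * (α * W (γ r)))) / (h:ℂ) with hμpdef
  set μm : ℝ → ℂ := fun r => (Complex.I * (deriv γ r * (α * W (γ r)))) / (h:ℂ) with hμmdef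
  set rp : ℝ → ℂ := fun r => -(Complex.I * (α * (deriv γ r * deriv W (γ r)))) * u (γ r)
    with hrpdef
  set rm : ℝ → ℂ := fun r => (Complex.I * (α * (deriv γ r * deriv W (γ r)))) * u (γ r)
    with hrmdef
  set G : ℝ → ℝ := fun r => ‖fp r‖ ^ 2 + ‖fm r‖ ^ 2 with hGdef
  set G' : ℝ → ℝ := fun r => 2 * ((μp r * fp r + rp r) * (starRingEnd ℂ) (fp r)).re
    + 2 * ((μm r * fm r + rm r) * (starRingEnd ℂ) (fm r)).re with hG'def
  set k0 : ℝ → ℝ := fun s => |(α * (deriv γ s * W (γ s))).im| with hk0def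
  set k : ℝ → ℝ := fun s => k0 s / h + M / δ with hkdef
  have hk0c : Continuous k0 := by
    have : Continuous fun s => α * (deriv γ s * W (γ s)) :=
      continuous_const.mul (hγ'c.mul (hWc.comp hγc))
    exact (Complex.continuous_im.comp this).abs
  have hkc : Continuous k := (hk0c.div_const h).add continuous_const
  -- derivatives of the basic composite functions
  have hud' : ∀ r ∈ S, HasDerivAt (fun s => u (γ s)) (deriv γ r * deriv u (γ r)) r :=
    fun r hr => comp_gamma' (hud _ (hSO r hr)) (hγd r)
  have hcd' : ∀ r ∈ S, HasDerivAt (fun s => deriv u (γ s))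
      (deriv γ r * deriv (deriv u) (γ r)) r :=
    fun r hr => comp_gamma' (hdud _ (hSO r hr)) (hγd r)
  have hWd' : ∀ r : ℝ, HasDerivAt (fun s => W (γ s)) (deriv γ r * deriv W (γ r)) r :=
    fun r => comp_gamma' (hW _).hasDerivAt (hγd r)
  -- derivative of fp and fm
  have hfpd : ∀ r ∈ S, HasDerivAt fp (μp r * fp r + rp r) r := by
    intro r hr
    have h1 : HasDerivAt fp ((h:ℂ) * (deriv γ r * deriv (deriv u) (γ r))
        - Complex.I * ((α * (deriv γ r * deriv W (γ r))) * u (γ r)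
          + (α * W (γ r)) * (deriv γ r * deriv u (γ r)))) r := by
      apply HasDerivAt.sub
      · exact (hcd' r hr).const_mul _
      · have hprod : HasDerivAt (fun s => (α * W (γ s)) * u (γ s))
            ((α * (deriv γ r * deriv W (γ r))) * u (γ r)
              + (α * W (γ r)) * (deriv γ r * deriv u (γ r))) r := by
          exact ((hWd' r).const_mul α).mul (hud' r hr)
        exact hprod.const_mul Complex.I
    convert h1 using 1
    rw [hddu _ (hSO r hr)]
    simp only [hμpdef, hrpdef, hfpdef]
    field_simp
    linear_combination (deriv γ r * α ^ 2 * W (γ r) ^ 2 * u (γ r)) * Complex.I_sq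
  have hfmd : ∀ r ∈ S, HasDerivAt fm (μm r * fm r + rm r) r := by
    intro r hr
    have h1 : HasDerivAt fm ((h:ℂ) * (deriv γ r * deriv (deriv u) (γ r))
        + Complex.I * ((α * (deriv γ r * deriv W (γ r))) * u (γ r)
          + (α * W (γ r)) * (deriv γ r * deriv u (γ r)))) r := by
      apply HasDerivAt.add
      · exact (hcd' r hr).const_mul _
      · have hprod : HasDerivAt (fun s => (α * W (γ s)) * u (γ s))
            ((α * (deriv γ r * deriv W (γ r))) * u (γ r)
              + (α * W (γ r)) * (deriv γ r * deriv u (γ r))) r := by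
          exact ((hWd' r).const_mul α).mul (hud' r hr)
        exact hprod.const_mul Complex.I
    convert h1 using 1
    rw [hddu _ (hSO r hr)]
    simp only [hμmdef, hrmdef, hfmdef]
    field_simp
    linear_combination (deriv γ r * α ^ 2 * W (γ r) ^ 2 * u (γ r)) * Complex.I_sq
  -- derivative of G
  have hGd : ∀ r ∈ S, HasDerivAt G (G' r) r := by
    intro r hr
    exact (hasDerivAt_normSq' (hfpd r hr)).add (hasDerivAt_normSq' (hfmd r hr))
  -- bounds
  have hmlb : ∀ r ∈ Set.Icc (0:ℝ) 1, δ ≤ ‖α * W (γ r)‖ := by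
    intro r hr
    rw [norm_mul]
    have h4 : C0⁻¹ * δW ≤ ‖α‖ * ‖W (γ r)‖ :=
      mul_le_mul hαn1 (hδWle r hr) hδWpos.le (le_trans (by positivity) hαn1)
    rw [hδdef]; exact h4
  have hmub : ∀ r ∈ Set.Icc (0:ℝ) 1, ‖α * W (γ r)‖ ≤ Mm := by
    intro r hr
    rw [norm_mul]
    exact mul_le_mul hαn2 (hMWge r hr) (norm_nonneg _) hC0pos.le
  have hrpb : ∀ r ∈ Set.Icc (0:ℝ) 1, ‖rp r‖ ≤ M * ‖u (γ r)‖ := by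
    intro r hr
    rw [hrpdef]
    simp only [norm_mul, norm_neg, Complex.norm_I, one_mul]
    apply mul_le_mul _ le_rfl (norm_nonneg _) hMnn
    rw [hMdef]
    exact mul_le_mul hαn2 (hMDge r hr) (by positivity) hC0pos.le
  have hab : ∀ r ∈ Set.Icc (0:ℝ) 1, 2 * δ * ‖u (γ r)‖ ≤ ‖fp r‖ + ‖fm r‖ := by
    intro r hr
    have hdiff : fm r - fp r = 2 * Complex.I * (α * W (γ r) * u (γ r)) := by
      rw [hfpdef, hfmdef]; ring
    have h1 : ‖fm r - fp r‖ = 2 * (‖α * W (γ r)‖ * ‖u (γ r)‖) := by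
      rw [hdiff]
      simp [norm_mul]
    have h2 : ‖fm r - fp r‖ ≤ ‖fm r‖ + ‖fp r‖ := norm_sub_le _ _
    have h3 : δ * ‖u (γ r)‖ ≤ ‖α * W (γ r)‖ * ‖u (γ r)‖ :=
      mul_le_mul_of_nonneg_right (hmlb r hr) (norm_nonneg _)
    linarith
  -- real part of μp, μm
  have hre : ∀ z : ℂ, (-(Complex.I * z) / (h:ℂ)).re = z.im / h := by
    intro z
    rw [div_eq_inv_mul, ← Complex.ofReal_inv, Complex.re_ofReal_mul]
    rw [div_eq_inv_mul]
    congr 1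
    simp [Complex.mul_re]
  have hre2 : ∀ z : ℂ, ((Complex.I * z) / (h:ℂ)).re = -z.im / h := by
    intro z
    have := hre (-z)
    simpa [neg_div] using this.symm
  have hμre : ∀ r : ℝ, (μp r).re ≤ k0 r / h ∧ (μm r).re ≤ k0 r / h := by
    intro r
    have hz : (deriv γ r * (α * W (γ r))).im = (α * (deriv γ r * W (γ r))).im := by
      congr 1; ring
    have hk0r : k0 r = |(α * (deriv γ r * W (γ r))).im| := by rw [hk0def]
    constructor
    · rw [hμpdef]
      simp only
      rw [hre, hk0r, ← hz]
      exact (div_le_div_iff_of_pos_right hh).mpr (le_abs_self _)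
    · rw [hμmdef]
      simp only
      rw [hre2, hk0r, ← hz]
      exact (div_le_div_iff_of_pos_right hh).mpr (neg_le_abs _)
  -- the Gronwall differential inequality
  have hGb : ∀ r ∈ Set.Icc (0:ℝ) 1, G' r ≤ 2 * k r * G r := by
    intro r hr
    have hXk := key_re_bound (μp r) (rp r) (fp r)
    have hYk := key_re_bound (μm r) (rm r) (fm r)
    have hμ := hμre r
    have hrp' := hrpb r hr
    have hrm' : ‖rm r‖ ≤ M * ‖u (γ r)‖ := by
      have heq : ‖rm r‖ = ‖rp r‖ := by
        rw [hrmdef, hrpdef]; simp [norm_mul]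
      rw [heq]; exact hrp'
    have habr := hab r hr
    have hPnn : (0:ℝ) ≤ ‖fp r‖ := norm_nonneg _
    have hQnn : (0:ℝ) ≤ ‖fm r‖ := norm_nonneg _
    have hAnn : (0:ℝ) ≤ ‖u (γ r)‖ := norm_nonneg _
    have hk0nn : (0:ℝ) ≤ k0 r := by rw [hk0def]; exact abs_nonneg _
    have hX : ((μp r * fp r + rp r) * (starRingEnd ℂ) (fp r)).re
        ≤ k0 r / h * ‖fp r‖ ^ 2 + M * ‖u (γ r)‖ * ‖fp r‖ := by
      have h1 : (μp r).re * ‖fp r‖ ^ 2 ≤ k0 r / h * ‖fp r‖ ^ 2 :=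
        mul_le_mul_of_nonneg_right hμ.1 (by positivity)
      have h2 : ‖rp r‖ * ‖fp r‖ ≤ M * ‖u (γ r)‖ * ‖fp r‖ :=
        mul_le_mul_of_nonneg_right hrp' hPnn
      linarith
    have hY : ((μm r * fm r + rm r) * (starRingEnd ℂ) (fm r)).re
        ≤ k0 r / h * ‖fm r‖ ^ 2 + M * ‖u (γ r)‖ * ‖fm r‖ := by
      have h1 : (μm r).re * ‖fm r‖ ^ 2 ≤ k0 r / h * ‖fm r‖ ^ 2 :=
        mul_le_mul_of_nonneg_right hμ.2 (by positivity)
      have h2 : ‖rm r‖ * ‖fm r‖ ≤ M * ‖u (γ r)‖ * ‖fm r‖ :=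
        mul_le_mul_of_nonneg_right hrm' hQnn
      linarith
    rw [hG'def, hkdef, hGdef]
    simp only
    exact arith1 hPnn hQnn hAnn (by positivity) hMnn hδpos hX hY habr
  -- Gronwall's inequality
  have hGron := gronwall_aux' hJS hkc hGd hGb
  -- the derivative of the phase function
  have hψd : ∀ s ∈ S, HasDerivAt (fun r : ℝ => (α * Φ (γ r)).im)
      ((α * (deriv γ s * W (γ s))).im) s := by
    intro s hs
    have h1 : HasDerivAt (fun r => Φ (γ r)) (deriv γ s * W (γ s)) s :=
      comp_gamma' (hΦ _ (hSU s hs)) (hγd s)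
    have h2 := h1.const_mul α
    have h3 := Complex.imCLM.hasFDerivAt.comp_hasDerivAt s h2
    simpa [Function.comp_def] using h3
  have hint : (∫ s in (0:ℝ)..t, |deriv (fun r : ℝ => (α * Φ (γ r)).im) s|)
      = ∫ s in (0:ℝ)..t, k0 s := by
    apply intervalIntegral.integral_congr
    intro s hs
    rw [Set.uIcc_of_le ht.1] at hs
    have hs' : s ∈ S := hJS ⟨hs.1, le_trans hs.2 ht.2⟩
    show |deriv (fun r : ℝ => (α * Φ (γ r)).im) s| = k0 s
    rw [(hψd s hs').deriv]
  -- splitting the integral of k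
  have hsplit : (∫ s in (0:ℝ)..t, k s)
      = h⁻¹ * (∫ s in (0:ℝ)..t, k0 s) + M / δ * t := by
    rw [hkdef]
    simp only
    rw [intervalIntegral.integral_add ((hk0c.div_const h).intervalIntegrable 0 t)
      intervalIntegrable_const]
    rw [intervalIntegral.integral_div, intervalIntegral.integral_const, smul_eq_mul]
    ring
  -- the comparison between the vector norm and fp, fm
  set Nv : ℝ → ℝ := fun r => ‖((u (γ r), -Complex.I * (h:ℂ) * deriv u (γ r)) : ℂ × ℂ)‖
    with hNvdef
  have hnormI : ∀ r : ℝ, ‖-Complex.I * (h:ℂ) * deriv u (γ r)‖ = ‖(h:ℂ) * deriv u (γ r)‖ := by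
    intro r
    rw [mul_assoc, norm_mul]
    simp
  have hNvnn : ∀ r : ℝ, 0 ≤ Nv r := by
    intro r; simp only [hNvdef]; exact norm_nonneg _
  have haNv : ∀ r : ℝ, ‖u (γ r)‖ ≤ Nv r := by
    intro r; simp only [hNvdef]; rw [Prod.norm_def]; dsimp only; exact le_max_left _ _
  have hcNv : ∀ r : ℝ, ‖(h:ℂ) * deriv u (γ r)‖ ≤ Nv r := by
    intro r; simp only [hNvdef]; rw [Prod.norm_def, ← hnormI r]; dsimp only
    exact le_max_right _ _
  have hNv : ∀ r ∈ Set.Icc (0:ℝ) 1, Nv r ≤ B * (‖fp r‖ + ‖fm r‖) := by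
    intro r hr
    have hPQnn : (0:ℝ) ≤ ‖fp r‖ + ‖fm r‖ := by positivity
    simp only [hNvdef]
    rw [Prod.norm_def]
    dsimp only
    apply max_le
    · have h5 : ‖u (γ r)‖ ≤ (‖fp r‖ + ‖fm r‖) / (2 * δ) := by
        rw [le_div_iff₀ (by positivity)]
        linarith only [hab r hr]
      have h6 : (‖fp r‖ + ‖fm r‖) / (2 * δ) ≤ B * (‖fp r‖ + ‖fm r‖) := by
        rw [div_eq_inv_mul]
        apply mul_le_mul_of_nonneg_right _ hPQnn
        rw [hBdef]
        rw [inv_eq_one_div]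
        linarith only []
      exact h5.trans h6
    · have h8 : (h:ℂ) * deriv u (γ r) = (fp r + fm r) / 2 := by
        rw [hfpdef, hfmdef]
        simp only
        ring
      have h9 : ‖-Complex.I * (h:ℂ) * deriv u (γ r)‖ ≤ (‖fp r‖ + ‖fm r‖) / 2 := by
        rw [hnormI r, h8]
        calc ‖(fp r + fm r) / 2‖ = ‖fp r + fm r‖ / 2 := by
              rw [norm_div]; norm_num
          _ ≤ (‖fp r‖ + ‖fm r‖) / 2 := by
              have := norm_add_le (fp r) (fm r); linarith only [this]
      have h10 : (‖fp r‖ + ‖fm r‖) / 2 ≤ B * (‖fp r‖ + ‖fm r‖) := by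
        have hpos : (0:ℝ) ≤ 1 / (2 * δ) * (‖fp r‖ + ‖fm r‖) := by positivity
        rw [hBdef]
        linarith only [hpos]
      exact h9.trans h10
  -- bound on the initial data
  have h0J : (0:ℝ) ∈ Set.Icc (0:ℝ) 1 := by norm_num
  have hfp0 : ‖fp 0‖ ≤ (1 + Mm) * Nv 0 := by
    rw [hfpdef]
    simp only
    calc ‖(h:ℂ) * deriv u (γ 0) - Complex.I * (α * W (γ 0) * u (γ 0))‖
        ≤ ‖(h:ℂ) * deriv u (γ 0)‖ + ‖Complex.I * (α * W (γ 0) * u (γ 0))‖ :=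
          norm_sub_le _ _
      _ ≤ Nv 0 + Mm * Nv 0 := by
          have h1 : ‖Complex.I * (α * W (γ 0) * u (γ 0))‖ ≤ Mm * Nv 0 := by
            rw [norm_mul, Complex.norm_I, one_mul, norm_mul]
            exact mul_le_mul (hmub 0 h0J) (haNv 0) (norm_nonneg _) hMmnn
          linarith [hcNv 0]
      _ = (1 + Mm) * Nv 0 := by ring
  have hfm0 : ‖fm 0‖ ≤ (1 + Mm) * Nv 0 := by
    rw [hfmdef]
    simp only
    calc ‖(h:ℂ) * deriv u (γ 0) + Complex.I * (α * W (γ 0) * u (γ 0))‖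
        ≤ ‖(h:ℂ) * deriv u (γ 0)‖ + ‖Complex.I * (α * W (γ 0) * u (γ 0))‖ :=
          norm_add_le _ _
      _ ≤ Nv 0 + Mm * Nv 0 := by
          have h1 : ‖Complex.I * (α * W (γ 0) * u (γ 0))‖ ≤ Mm * Nv 0 := by
            rw [norm_mul, Complex.norm_I, one_mul, norm_mul]
            exact mul_le_mul (hmub 0 h0J) (haNv 0) (norm_nonneg _) hMmnn
          linarith [hcNv 0]
      _ = (1 + Mm) * Nv 0 := by ring
  have hG0 : G 0 ≤ 2 * ((1 + Mm) * Nv 0) ^ 2 := by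
    rw [hGdef]
    simp only
    exact arith2 (norm_nonneg _) (norm_nonneg _) hfp0 hfm0
  -- assemble everything
  rw [hint]
  set E1 : ℝ := Real.exp (h⁻¹ * ∫ s in (0:ℝ)..t, k0 s) with hE1def
  have hE1pos : 0 < E1 := Real.exp_pos _
  have hsq : ∀ z : ℝ, Real.exp z ^ 2 = Real.exp (2 * z) := by
    intro z; rw [sq, ← Real.exp_add]; ring_nf
  have hexp : Real.exp (2 * ∫ s in (0:ℝ)..t, k s)
      = (E1 * Real.exp (M / δ * t)) ^ 2 := by
    rw [hsplit, mul_pow, hE1def, hsq, hsq, ← Real.exp_add]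
    congr 1
    ring
  have hGt := hGron t ht
  rw [hexp] at hGt
  have hexpt : Real.exp (M / δ * t) ≤ Real.exp (M / δ) :=
    Real.exp_le_exp.mpr (mul_le_of_le_one_right (by positivity) ht.2)
  have hG0nn : 0 ≤ G 0 := by rw [hGdef]; positivity
  have h12 : (E1 * Real.exp (M / δ * t)) ^ 2 ≤ (E1 * Real.exp (M / δ)) ^ 2 := by
    apply pow_le_pow_left₀ (by positivity)
    exact mul_le_mul_of_nonneg_left hexpt hE1pos.le
  have h13 : G t ≤ 2 * ((1 + Mm) * Nv 0) ^ 2 * (E1 * Real.exp (M / δ)) ^ 2 := by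
    calc G t ≤ G 0 * (E1 * Real.exp (M / δ * t)) ^ 2 := hGt
      _ ≤ 2 * ((1 + Mm) * Nv 0) ^ 2 * (E1 * Real.exp (M / δ)) ^ 2 :=
        mul_le_mul hG0 h12 (by positivity) (by positivity)
  have h11 : (‖fp t‖ + ‖fm t‖) ^ 2 ≤ 2 * G t := by
    rw [hGdef]
    simp only
    exact arith3 _ _
  have hPQ2 : (‖fp t‖ + ‖fm t‖) ^ 2
      ≤ (2 * (1 + Mm) * Real.exp (M / δ) * E1 * Nv 0) ^ 2 := by
    have : (2 * (1 + Mm) * Real.exp (M / δ) * E1 * Nv 0) ^ 2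
        = 2 * (2 * ((1 + Mm) * Nv 0) ^ 2 * (E1 * Real.exp (M / δ)) ^ 2) := by ring
    have h14 : 2 * G t ≤ 2 * (2 * ((1 + Mm) * Nv 0) ^ 2 * (E1 * Real.exp (M / δ)) ^ 2) :=
      mul_le_mul_of_nonneg_left h13 (by norm_num)
    exact (h11.trans h14).trans_eq this.symm
  have hPQ : ‖fp t‖ + ‖fm t‖ ≤ 2 * (1 + Mm) * Real.exp (M / δ) * E1 * Nv 0 := by
    have hlhs : (0:ℝ) ≤ ‖fp t‖ + ‖fm t‖ := by positivity
    have hrhs : (0:ℝ) ≤ 2 * (1 + Mm) * Real.exp (M / δ) * E1 * Nv 0 :=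
      mul_nonneg (mul_nonneg (mul_nonneg (mul_nonneg (by norm_num)
        (by linarith only [hMmnn])) (Real.exp_pos _).le) hE1pos.le) (hNvnn 0)
    exact (pow_le_pow_iff_left₀ hlhs hrhs two_ne_zero).mp hPQ2
  show Nv t ≤ B * 2 * (1 + Mm) * Real.exp (M / δ) * E1 * Nv 0
  calc Nv t ≤ B * (‖fp t‖ + ‖fm t‖) := hNv t ht
    _ ≤ B * (2 * (1 + Mm) * Real.exp (M / δ) * E1 * Nv 0) :=
      mul_le_mul_of_nonneg_left hPQ hBpos.le
    _ = B * 2 * (1 + Mm) * Real.exp (M / δ) * E1 * Nv 0 := by ring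
end
end

section
/- Let α, k ∈ ℂ with k ∉ Λ*. Suppose 𝐮 = (u₁,u₂) and 𝐯 = (v₁,v₂) are Λ-periodic smooth maps ℂ → ℂ² with D_S(α)𝐮 = 0 and D_S(α)𝐯 + k𝐯 = 0. Then the Wronskian Wr(𝐮,𝐯) := u₁v₂ − u₂v₁ vanishes identically on ℂ. -/
noncomputable section

open Complex

/-- `ω = e^{2πi/3}`. -/
def ω : ℂ := Complex.exp (2 * Real.pi * Complex.I / 3)

/-- The hexagonal lattice `Λ = ωℤ + ℤ`. -/
def HexLat : Set ℂ := {z : ℂ | ∃ m n : ℤ, z = (m : ℂ) * ω + (n : ℂ)}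

/-- The dual lattice `Λ* = {k : ⟨γ, k⟩ ∈ 2πℤ for all γ ∈ Λ}`. -/
def HexLatDual : Set ℂ :=
  {k : ℂ | ∀ γ ∈ HexLat, ∃ m : ℤ, (γ * (starRingEnd ℂ) k).re = 2 * Real.pi * (m : ℝ)}

/-- `Λ`-periodicity. -/
def HexPer {E : Type*} (u : ℂ → E) : Prop := ∀ z : ℂ, ∀ γ ∈ HexLat, u (z + γ) = u z

/-- The operator `2 D_{z̄} = (1/i)(∂_{x₁} + i ∂_{x₂})`. -/
def Dbar (u : ℂ → ℂ) (z : ℂ) : ℂ :=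
  Complex.I⁻¹ * (fderiv ℝ u z 1 + Complex.I * fderiv ℝ u z Complex.I)

/-- The scalar operator `P(α,k)u = (2D_{z̄} + k)² u − α² V u`. -/
def Pop (V : ℂ → ℂ) (α k : ℂ) (u : ℂ → ℂ) (z : ℂ) : ℂ :=
  Dbar (fun w => Dbar u w + k * u w) z + k * (Dbar u z + k * u z) - α ^ 2 * V z * u z

/-- The system `D_S(α)(u₁,u₂) = (2D_{z̄}u₁ + αVu₂, αu₁ + 2D_{z̄}u₂)`. -/
def DS (V : ℂ → ℂ) (α : ℂ) (u : ℂ → ℂ × ℂ) (z : ℂ) : ℂ × ℂ :=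
  (Dbar (fun w => (u w).1) z + α * V z * (u z).2,
   α * (u z).1 + Dbar (fun w => (u w).2) z)

/-- The set `𝒜` of magic parameters. -/
def IsMagic (V : ℂ → ℂ) (α : ℂ) : Prop :=
  ∀ k : ℂ, ∃ u : ℂ → ℂ, ContDiff ℝ (⊤ : ℕ∞) u ∧ HexPer u ∧ u ≠ 0 ∧
    ∀ z : ℂ, Pop V α k u z = 0

/-- The standing assumptions on the potential `V`: real-analytic, `Λ`-periodic,
even, `V(ωz) = ω²V(z)`, and `conj (V (conj z)) = V z`. -/
def GoodV (V : ℂ → ℂ) : Prop :=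
  (∀ z : ℂ, AnalyticAt ℝ V z) ∧ HexPer V ∧ (∀ z : ℂ, V (-z) = V z) ∧
  (∀ z : ℂ, V (ω * z) = ω ^ 2 * V z) ∧
  (∀ z : ℂ, (starRingEnd ℂ) (V ((starRingEnd ℂ) z)) = V z)


open MeasureTheory Real intervalIntegral Set

lemma one_mem_HexLat : (1 : ℂ) ∈ HexLat := ⟨0, 1, by norm_num⟩
lemma omega_mem_HexLat : ω ∈ HexLat := ⟨1, 0, by norm_num⟩

lemma Dbar_mul {f g : ℂ → ℂ} {z : ℂ} (hf : DifferentiableAt ℝ f z) (hg : DifferentiableAt ℝ g z) :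
    Dbar (fun w => f w * g w) z = Dbar f z * g z + f z * Dbar g z := by
  unfold Dbar
  rw [fderiv_fun_mul hf hg]
  simp only [ContinuousLinearMap.add_apply, ContinuousLinearMap.coe_smul', Pi.smul_apply,
    smul_eq_mul]
  ring

lemma Dbar_sub {f g : ℂ → ℂ} {z : ℂ} (hf : DifferentiableAt ℝ f z) (hg : DifferentiableAt ℝ g z) :
    Dbar (fun w => f w - g w) z = Dbar f z - Dbar g z := by
  unfold Dbar
  rw [fderiv_fun_sub hf hg]
  simp only [ContinuousLinearMap.coe_sub', Pi.sub_apply]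
  ring

lemma omega_eq : ω = (-(1/2) : ℝ) + (Real.sqrt 3 / 2 : ℝ) * Complex.I := by
  rw [ω, show (2 * Real.pi * Complex.I / 3) = ((2 * Real.pi / 3 : ℝ) : ℂ) * Complex.I by push_cast; ring,
    Complex.exp_mul_I, ← Complex.ofReal_cos, ← Complex.ofReal_sin,
    show (2 * Real.pi / 3 : ℝ) = Real.pi - Real.pi / 3 by ring,
    Real.cos_pi_sub, Real.sin_pi_sub, Real.cos_pi_div_three, Real.sin_pi_div_three]

lemma omega_re : ω.re = -(1/2) := by rw [omega_eq]; simp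
lemma omega_im : ω.im = Real.sqrt 3 / 2 := by rw [omega_eq]; simp

lemma fourier_inj {f : ℝ → ℂ} (hf : Continuous f) (hper : ∀ s, f (s + 1) = f s)
    (hc : ∀ n : ℤ, (∫ s in (0:ℝ)..1, Complex.exp (2 * π * (-n : ℂ) * Complex.I * s) * f s) = 0) :
    ∀ s, f s = 0 := by
  haveI : Fact ((0:ℝ) < 1) := ⟨one_pos⟩
  set g : AddCircle (1:ℝ) → ℂ := AddCircle.liftIco 1 0 f with hg
  have hgc : Continuous g := by
    apply AddCircle.liftIco_zero_continuous
    · exact (hper 0).symm.trans (by norm_num)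
    · exact hf.continuousOn
  have hgf : ∀ x : ℝ, x ∈ Set.Ico (0:ℝ) 1 → g x = f x := fun x hx =>
    AddCircle.liftIco_zero_coe_apply hx
  have hcoeff : ∀ n : ℤ, fourierCoeff g n = 0 := by
    intro n
    rw [fourierCoeff_eq_intervalIntegral g n 0]
    simp only [one_smul, zero_add, one_div, inv_one]
    rw [← hc n]
    apply intervalIntegral.integral_congr
    intro x hx
    rw [Set.uIcc_of_le (by norm_num : (0:ℝ) ≤ 1)] at hx
    have hfour : (fourier (-n) (x : AddCircle (1:ℝ)) : ℂ) =
        Complex.exp (2 * π * (-n : ℂ) * Complex.I * x) := by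
      rw [fourier_coe_apply]; push_cast; ring_nf
    have hgx : g x = f x := by
      rcases eq_or_lt_of_le hx.2 with h1 | h1
      · have e1 : ((x:ℝ) : AddCircle (1:ℝ)) = ((0:ℝ) : AddCircle (1:ℝ)) := by
          rw [h1]
          have := AddCircle.coe_add_period 1 (0:ℝ)
          rw [zero_add] at this
          exact this
        rw [e1, hgf 0 (by constructor <;> norm_num), h1]
        exact ((by simpa using hper 0) : f 1 = f 0).symm
      · exact hgf x ⟨hx.1, h1⟩
    show (fourier (-n) (x : AddCircle (1:ℝ)) : ℂ) • g x = _
    rw [smul_eq_mul, hgx, hfour]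
  -- now g = 0
  have hg0 : ∀ x, g x = 0 := by
    set μ := (AddCircle.haarAddCircle : Measure (AddCircle (1:ℝ)))
    set gL : Lp ℂ 2 μ := ContinuousMap.toLp 2 μ ℂ (ContinuousMap.mk g hgc) with hgL
    have hae : (gL : AddCircle (1:ℝ) → ℂ) =ᵐ[μ] g := ContinuousMap.coeFn_toLp (p := 2) (μ := μ) (𝕜 := ℂ) _
    have hcoeffL : ∀ n : ℤ, fourierCoeff (gL : AddCircle (1:ℝ) → ℂ) n = 0 := by
      intro n
      rw [← hcoeff n]
      unfold fourierCoeff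
      apply MeasureTheory.integral_congr_ae
      filter_upwards [hae] with x hx
      rw [hx]
    have hrepr : (@fourierBasis 1 ⟨one_pos⟩).repr gL = 0 := by
      ext i
      rw [fourierBasis_repr, hcoeffL i]
      rfl
    have hgL0 : gL = 0 := by
      have := congrArg (@fourierBasis 1 ⟨one_pos⟩).repr.symm hrepr
      rwa [LinearIsometryEquiv.symm_apply_apply, map_zero] at this
    have hae0 : g =ᵐ[μ] (fun _ => (0:ℂ)) := by
      refine (hae.symm.trans ?_)
      rw [hgL0]
      exact MeasureTheory.Lp.coeFn_zero ℂ 2 μ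
    have := (Continuous.ae_eq_iff_eq μ hgc continuous_const).mp hae0
    intro x; rw [this]
  intro s
  have hfract : f s = f (Int.fract s) := by
    have h2 : ∀ (x : ℝ) (n : ℤ), f (x + n) = f x := by
      intro x n
      have := (Function.Periodic.int_mul (hper : Function.Periodic f 1) n) x
      simpa using this
    have h3 := h2 (Int.fract s) ⌊s⌋
    rw [show Int.fract s + (⌊s⌋:ℝ) = s by rw [Int.fract]; ring] at h3
    exact h3
  rw [hfract, ← hgf (Int.fract s) ⟨Int.fract_nonneg s, Int.fract_lt_one s⟩]
  exact hg0 _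


lemma kernel {k : ℂ} (W : ℂ → ℂ) (hWs : ContDiff ℝ (⊤:ℕ∞) W)
    (hW1 : ∀ z, W (z + 1) = W z) (hWω : ∀ z, W (z + ω) = W z)
    (hpde : ∀ z : ℂ, fderiv ℝ W z 1 + Complex.I * fderiv ℝ W z Complex.I
      + Complex.I * k * W z = 0)
    (hk : k ∉ HexLatDual) : ∀ z, W z = 0 := by
  have h3pos : (0:ℝ) < Real.sqrt 3 := Real.sqrt_pos.mpr (by norm_num)
  have hsq3 : (Real.sqrt 3 : ℝ) ≠ 0 := ne_of_gt h3pos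
  have hWdiff : ∀ z, DifferentiableAt ℝ W z := fun z => (hWs.differentiable (by simp)) z
  have hWcont : Continuous W := hWs.continuous
  have hfdWcont : Continuous fun z => fderiv ℝ W z := hWs.continuous_fderiv (by simp)
  -- the directional derivative identity
  have key : ∀ z, fderiv ℝ W z ω
      = ω * fderiv ℝ W z 1 - (Real.sqrt 3 / 2 : ℂ) * (k * W z) := by
    intro z
    have hdec : (ω:ℂ) = (-(1/2):ℝ) • (1:ℂ) + (Real.sqrt 3 / 2 : ℝ) • Complex.I := by
      rw [omega_eq]; simp [Complex.real_smul]
    rw [hdec]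
    simp only [map_add, ContinuousLinearMap.map_smul]
    simp only [Complex.real_smul]
    push_cast
    linear_combination (-(((Real.sqrt 3:ℂ)/2)) * Complex.I) * hpde z +
      (((Real.sqrt 3:ℂ)/2) * (fderiv ℝ W z Complex.I + k * W z)) * Complex.I_mul_I
  -- the exponential
  set e : ℤ → ℝ → ℂ := fun n s => Complex.exp (2 * π * (-n : ℂ) * Complex.I * s) with he_def
  have he_cont : ∀ n, Continuous (e n) := by
    intro n
    exact Complex.continuous_exp.comp ((continuous_const).mul Complex.continuous_ofReal)
  have he_deriv : ∀ (n : ℤ) (s : ℝ),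
      HasDerivAt (e n) (2 * π * (-n : ℂ) * Complex.I * e n s) s := by
    intro n s
    have h1 : HasDerivAt (fun s:ℝ => (2 * π * (-n : ℂ) * Complex.I) * (s:ℂ))
        (2 * π * (-n : ℂ) * Complex.I) s := by
      simpa using (Complex.ofRealCLM.hasDerivAt (x := s)).const_mul (2 * π * (-n : ℂ) * Complex.I)
    simpa [he_def, mul_comm] using h1.cexp
  have he_zero : ∀ n, e n 0 = 1 := by intro n; simp [he_def]
  have he_one : ∀ n, e n 1 = 1 := by
    intro n
    show Complex.exp _ = 1
    rw [show (2 * π * (-n : ℂ) * Complex.I * ((1:ℝ):ℂ)) = ((-n : ℤ) : ℂ) * (2 * π * Complex.I) by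
      push_cast; ring]
    exact Complex.exp_int_mul_two_pi_mul_I (-n)
  -- derivative along s
  have hds : ∀ (t s : ℝ), HasDerivAt (fun s : ℝ => W (↑s + ↑t * ω))
      (fderiv ℝ W (↑s + ↑t * ω) 1) s := by
    intro t s
    have h1 : HasDerivAt (fun s : ℝ => ((s:ℂ) + ↑t * ω)) 1 s := by
      simpa using (Complex.ofRealCLM.hasDerivAt (x := s)).add_const ((t:ℂ) * ω)
    exact ((hWdiff _).hasFDerivAt).comp_hasDerivAt s h1
  have hdt : ∀ (t s : ℝ), HasDerivAt (fun t : ℝ => W (↑s + ↑t * ω))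
      (fderiv ℝ W (↑s + ↑t * ω) ω) t := by
    intro t s
    have h1 : HasDerivAt (fun t : ℝ => ((s:ℂ) + ↑t * ω)) ω t := by
      simpa using ((Complex.ofRealCLM.hasDerivAt (x := t)).mul_const ω).const_add (s:ℂ)
    exact ((hWdiff _).hasFDerivAt).comp_hasDerivAt t h1
  -- Fourier coefficients as functions of t
  set c : ℤ → ℝ → ℂ := fun n t => ∫ s in (0:ℝ)..1, e n s * W (↑s + ↑t * ω) with hc_def
  set lam : ℤ → ℂ := fun n => 2 * π * (n:ℂ) * Complex.I * ω - (Real.sqrt 3 / 2 : ℂ) * k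
    with hlam_def
  have hderiv : ∀ (n : ℤ) (t₀ : ℝ), HasDerivAt (c n) (lam n * c n t₀) t₀ := by
    intro n t₀
    have haff : ∀ t : ℝ, Continuous fun s : ℝ => ((s:ℂ) + (t:ℂ) * ω) := fun t =>
      Complex.continuous_ofReal.add continuous_const
    have haff2 : Continuous fun p : ℝ × ℝ => ((p.2 : ℂ) + (p.1 : ℂ) * ω) :=
      (Complex.continuous_ofReal.comp continuous_snd).add
        ((Complex.continuous_ofReal.comp continuous_fst).mul continuous_const)
    have hFcont : ∀ t : ℝ, Continuous (fun s : ℝ => e n s * W (↑s + ↑t * ω)) := by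
      intro t
      exact (he_cont n).mul (hWcont.comp (haff t))
    have hF'cont : Continuous fun p : ℝ × ℝ => e n p.2 * fderiv ℝ W (↑p.2 + ↑p.1 * ω) ω :=
      ((he_cont n).comp continuous_snd).mul ((hfdWcont.comp haff2).clm_apply continuous_const)
    have hF't₀cont : Continuous fun s : ℝ => e n s * fderiv ℝ W (↑s + ↑t₀ * ω) ω :=
      (he_cont n).mul ((hfdWcont.comp (haff t₀)).clm_apply continuous_const)
    obtain ⟨C, hC⟩ := (IsCompact.exists_bound_of_continuousOn
      ((isCompact_Icc.prod isCompact_Icc) :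
        IsCompact ((Icc (t₀-1) (t₀+1)) ×ˢ (Icc (0:ℝ) 1))) hF'cont.continuousOn)
    have hbound : ∀ s : ℝ, s ∈ Set.uIoc (0:ℝ) 1 → ∀ t ∈ Metric.ball t₀ 1,
        ‖e n s * fderiv ℝ W (↑s + ↑t * ω) ω‖ ≤ C := by
      intro s hs t ht
      have hs' : s ∈ Icc (0:ℝ) 1 := by
        rw [Set.uIoc_of_le (by norm_num : (0:ℝ) ≤ 1)] at hs
        exact ⟨hs.1.le, hs.2⟩
      have ht' : t ∈ Icc (t₀-1) (t₀+1) := by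
        rw [Metric.mem_ball, Real.dist_eq, abs_sub_lt_iff] at ht
        constructor
        · linarith [ht.2]
        · linarith [ht.1]
      exact hC (t, s) ⟨ht', hs'⟩
    have main := intervalIntegral.hasDerivAt_integral_of_dominated_loc_of_deriv_le
      (F := fun t s => e n s * W (↑s + ↑t * ω))
      (F' := fun t s => e n s * fderiv ℝ W (↑s + ↑t * ω) ω)
      (𝕜 := ℝ) (bound := fun _ => C) (a := 0) (b := 1) (μ := volume) (x₀ := t₀) (s := Metric.ball t₀ 1)
      (Metric.ball_mem_nhds t₀ one_pos)
      (Filter.Eventually.of_forall fun t => (hFcont t).aestronglyMeasurable)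
      ((hFcont t₀).intervalIntegrable 0 1)
      hF't₀cont.aestronglyMeasurable
      (Filter.Eventually.of_forall hbound)
      (intervalIntegrable_const)
      (Filter.Eventually.of_forall fun s hs t ht => ((hdt t s).const_mul (e n s)))
    -- now compute the value of the integral
    have hv'cont : Continuous (fun s : ℝ => fderiv ℝ W (↑s + ↑t₀ * ω) 1) :=
      (hfdWcont.comp (haff t₀)).clm_apply continuous_const
    have hparts := intervalIntegral.integral_mul_deriv_eq_deriv_mul
      (u := e n) (v := fun s : ℝ => W (↑s + ↑t₀ * ω))
      (u' := fun s => 2 * π * (-n:ℂ) * Complex.I * e n s)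
      (v' := fun s => fderiv ℝ W (↑s + ↑t₀ * ω) 1) (a := 0) (b := 1)
      (fun x _ => he_deriv n x) (fun x _ => hds t₀ x)
      ((continuous_const.mul (he_cont n)).intervalIntegrable 0 1)
      (hv'cont.intervalIntegrable 0 1)
    have hWend : W ((1:ℂ) + ↑t₀ * ω) = W (↑t₀ * ω) := by
      rw [show (1:ℂ) + ↑t₀ * ω = ↑t₀ * ω + 1 by ring]
      exact hW1 _
    have htail : (∫ s in (0:ℝ)..1, (2 * π * (-n:ℂ) * Complex.I * e n s) * W (↑s + ↑t₀ * ω))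
        = 2 * π * (-n:ℂ) * Complex.I * c n t₀ := by
      rw [hc_def, ← intervalIntegral.integral_const_mul]
      apply intervalIntegral.integral_congr
      intro s _
      ring
    simp only [he_one, he_zero, one_mul, Complex.ofReal_one, Complex.ofReal_zero, zero_add]
      at hparts
    rw [hWend, htail] at hparts
    have hsub : (∫ s in (0:ℝ)..1, e n s * fderiv ℝ W (↑s + ↑t₀ * ω) ω)
        = (∫ s in (0:ℝ)..1, (ω * (e n s * fderiv ℝ W (↑s + ↑t₀ * ω) 1)
            - (Real.sqrt 3 / 2 : ℂ) * k * (e n s * W (↑s + ↑t₀ * ω)))) := by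
      apply intervalIntegral.integral_congr
      intro s _
      beta_reduce
      rw [key (↑s + ↑t₀ * ω)]
      ring
    have hvalue : (∫ s in (0:ℝ)..1, e n s * fderiv ℝ W (↑s + ↑t₀ * ω) ω)
        = lam n * c n t₀ := by
      rw [hsub, intervalIntegral.integral_sub
        (show IntervalIntegrable (fun s : ℝ => ω * (e n s * fderiv ℝ W (↑s + ↑t₀ * ω) 1)) volume 0 1 from (continuous_const.mul ((he_cont n).mul hv'cont)).intervalIntegrable 0 1)
        (show IntervalIntegrable (fun s : ℝ => (Real.sqrt 3 / 2 : ℂ) * k * (e n s * W (↑s + ↑t₀ * ω))) volume 0 1 from (continuous_const.mul ((he_cont n).mul (show Continuous fun s : ℝ => W (↑s + ↑t₀ * ω) from hWcont.comp (haff t₀)))).intervalIntegrable 0 1),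
        intervalIntegral.integral_const_mul, intervalIntegral.integral_const_mul, hparts]
      simp only [hlam_def]
      push_cast
      ring
    have hmain2 := main.2
    rw [hvalue] at hmain2
    exact hmain2
  -- solve the ODE
  have hode : ∀ (n : ℤ) (t : ℝ), c n t = c n 0 * Complex.exp (lam n * t) := by
    intro n t
    have hg : ∀ t : ℝ, HasDerivAt (fun t : ℝ => c n t * Complex.exp (-(lam n) * t)) 0 t := by
      intro t
      have h2 : HasDerivAt (fun t : ℝ => -(lam n) * (t:ℂ)) (-(lam n)) t := by
        simpa using (Complex.ofRealCLM.hasDerivAt (x := t)).const_mul (-(lam n))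
      have h1 := h2.cexp
      have h3 : HasDerivAt (fun t : ℝ => c n t * Complex.exp (-(lam n) * t)) _ t := (hderiv n t).mul h1
      convert h3 using 1
      ring
    have hconst := is_const_of_deriv_eq_zero (f := fun t : ℝ => c n t * Complex.exp (-(lam n) * t))
      (fun x => (hg x).differentiableAt) (fun x => (hg x).deriv) t 0
    simp only [Complex.ofReal_zero, mul_zero, Complex.exp_zero, mul_one] at hconst
    have hmul : Complex.exp (-(lam n) * t) * Complex.exp (lam n * t) = 1 := by
      rw [← Complex.exp_add, show -(lam n) * (t:ℂ) + lam n * t = 0 by ring, Complex.exp_zero]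
    calc c n t = c n t * (Complex.exp (-(lam n) * t) * Complex.exp (lam n * t)) := by
          rw [hmul, mul_one]
      _ = (c n t * Complex.exp (-(lam n) * t)) * Complex.exp (lam n * t) := by ring
      _ = c n 0 * Complex.exp (lam n * t) := by rw [hconst]
  -- periodicity in t
  have hper : ∀ n : ℤ, c n 1 = c n 0 := by
    intro n
    simp only [hc_def]
    apply intervalIntegral.integral_congr
    intro s _
    have := hWω (↑s + ↑(0:ℝ) * ω)
    push_cast at this ⊢
    rw [show (s:ℂ) + 1 * ω = (↑s + 0 * ω) + ω by ring] at *
    rw [this]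
  -- k not in dual lattice means exp (lam n) ≠ 1
  have hexp_ne : ∀ n : ℤ, Complex.exp (lam n) ≠ 1 := by
    intro n hcon
    apply hk
    rw [Complex.exp_eq_one_iff] at hcon
    obtain ⟨m, hm⟩ := hcon
    rw [hlam_def] at hm
    rw [Complex.ext_iff] at hm
    obtain ⟨hre, him⟩ := hm
    simp only [Complex.mul_re, Complex.mul_im, Complex.sub_re, Complex.sub_im, Complex.add_re,
      Complex.add_im, Complex.I_re, Complex.I_im, Complex.ofReal_re, Complex.ofReal_im,
      Complex.intCast_re, Complex.intCast_im,
      Complex.div_re, Complex.div_im, Complex.one_re, Complex.one_im,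
      omega_re, omega_im, Complex.re_ofNat, Complex.im_ofNat] at hre him
    ring_nf at hre him
    rw [show Complex.normSq 2 = 4 by simp [Complex.normSq_apply]; norm_num] at hre him
    have hkre : k.re = -(2 * π * n) := by
      have h1 : Real.sqrt 3 * (k.re + 2 * π * n) = 0 := by linear_combination (-2 : ℝ) * hre
      rcases mul_eq_zero.mp h1 with h | h
      · exact absurd h hsq3
      · linarith
    have hkim : Real.sqrt 3 * k.im = -(2 * π * n) - 4 * π * m := by
      linear_combination (-2 : ℝ) * him
    intro γ hγ
    obtain ⟨p, q, rfl⟩ := hγ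
    refine ⟨-(q * n + p * m), ?_⟩
    simp only [Complex.mul_re, Complex.add_re, Complex.add_im, Complex.mul_im,
      Complex.intCast_re, Complex.intCast_im, Complex.conj_re, Complex.conj_im,
      omega_re, omega_im, Complex.one_re, Complex.one_im]
    push_cast
    ring_nf
    ring_nf at hkre hkim
    linear_combination (q - p * (1/2) : ℝ) * hkre + (p / 2 : ℝ) * hkim
  have hczero : ∀ (n : ℤ) (t : ℝ), c n t = 0 := by
    intro n t
    have h1 := hper n
    rw [hode n 1, hode n 0] at h1
    simp only [Complex.ofReal_one, Complex.ofReal_zero, mul_one, mul_zero, Complex.exp_zero] at h1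
    have h0 : c n 0 = 0 := by
      by_contra h
      apply hexp_ne n
      have h2 : c n 0 * Complex.exp (lam n) = c n 0 * 1 := by rw [mul_one]; exact h1
      exact mul_left_cancel₀ h h2
    rw [hode n t, h0, zero_mul]
  -- conclude via fourier_inj
  intro z
  set t : ℝ := 2 * z.im / Real.sqrt 3 with ht_def
  set f : ℝ → ℂ := fun s => W (↑s + ↑t * ω) with hf_def
  have hfz : ∀ s, f s = 0 := by
    apply fourier_inj
    · exact hWcont.comp (Complex.continuous_ofReal.add continuous_const)
    · intro s
      have := hW1 (↑s + ↑t * ω)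
      simp only [hf_def]
      push_cast
      rw [show (s:ℂ) + 1 + ↑t * ω = (↑s + ↑t * ω) + 1 by ring]
      exact this
    · intro n
      exact hczero n t
  have : z = ↑(z.re + z.im / Real.sqrt 3) + ↑t * ω := by
    apply Complex.ext
    · simp [omega_re, ht_def]
      field_simp
      ring
    · simp only [Complex.add_im, Complex.ofReal_im, Complex.mul_im, Complex.ofReal_re,
        omega_im, omega_re, ht_def, zero_add, zero_mul, add_zero, mul_zero, sub_zero]
      field_simp
  rw [this]
  exact hfz _

theorem stmt10 (V : ℂ → ℂ) (hV : GoodV V) (α k : ℂ) (hk : k ∉ HexLatDual)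
    (u v : ℂ → ℂ × ℂ)
    (hu : ContDiff ℝ (⊤ : ℕ∞) u) (hup : HexPer u)
    (hv : ContDiff ℝ (⊤ : ℕ∞) v) (hvp : HexPer v)
    (hueq : ∀ z : ℂ, DS V α u z = 0)
    (hveq : ∀ z : ℂ, DS V α v z + k • v z = 0) :
    ∀ z : ℂ, (u z).1 * (v z).2 - (u z).2 * (v z).1 = 0 := by
  have hu1 : ContDiff ℝ (⊤:ℕ∞) (fun z => (u z).1) := hu.fst
  have hu2 : ContDiff ℝ (⊤:ℕ∞) (fun z => (u z).2) := hu.snd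
  have hv1 : ContDiff ℝ (⊤:ℕ∞) (fun z => (v z).1) := hv.fst
  have hv2 : ContDiff ℝ (⊤:ℕ∞) (fun z => (v z).2) := hv.snd
  set W : ℂ → ℂ := fun z => (u z).1 * (v z).2 - (u z).2 * (v z).1 with hWdef
  have hWs : ContDiff ℝ (⊤:ℕ∞) W := (hu1.mul hv2).sub (hu2.mul hv1)
  have hW1 : ∀ z, W (z + 1) = W z := by
    intro z
    simp only [hWdef, hup z 1 one_mem_HexLat, hvp z 1 one_mem_HexLat]
  have hWω : ∀ z, W (z + ω) = W z := by
    intro z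
    simp only [hWdef, hup z ω omega_mem_HexLat, hvp z ω omega_mem_HexLat]
  have hd : ∀ (f : ℂ → ℂ), ContDiff ℝ (⊤:ℕ∞) f → ∀ z, DifferentiableAt ℝ f z := by
    intro f hf z
    exact hf.differentiable (by simp) z
  have hDW : ∀ z, Dbar W z + k * W z = 0 := by
    intro z
    have h1 : Dbar (fun w => (u w).1) z + α * V z * (u z).2 = 0 := by
      have := congrArg Prod.fst (hueq z)
      simpa [DS] using this
    have h2 : α * (u z).1 + Dbar (fun w => (u w).2) z = 0 := by
      have := congrArg Prod.snd (hueq z)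
      simpa [DS] using this
    have h3 : Dbar (fun w => (v w).1) z + α * V z * (v z).2 + k * (v z).1 = 0 := by
      have := congrArg Prod.fst (hveq z)
      simpa [DS, add_assoc] using this
    have h4 : α * (v z).1 + Dbar (fun w => (v w).2) z + k * (v z).2 = 0 := by
      have := congrArg Prod.snd (hveq z)
      simpa [DS, add_assoc] using this
    have hrw : Dbar W z = Dbar (fun w => (u w).1) z * (v z).2 + (u z).1 * Dbar (fun w => (v w).2) z
        - (Dbar (fun w => (u w).2) z * (v z).1 + (u z).2 * Dbar (fun w => (v w).1) z) := by
      rw [hWdef]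
      rw [Dbar_sub (f := fun w => (u w).1 * (v w).2) (g := fun w => (u w).2 * (v w).1) ((hd _ hu1 z).mul (hd _ hv2 z)) ((hd _ hu2 z).mul (hd _ hv1 z)),
        Dbar_mul (hd _ hu1 z) (hd _ hv2 z), Dbar_mul (hd _ hu2 z) (hd _ hv1 z)]
    rw [hrw]
    linear_combination (v z).2 * h1 + (u z).1 * h4 - (v z).1 * h2 - (u z).2 * h3
  have hpde : ∀ z, fderiv ℝ W z 1 + Complex.I * fderiv ℝ W z Complex.I
      + Complex.I * k * W z = 0 := by
    intro z
    have h := hDW z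
    simp only [Dbar, Complex.inv_I] at h
    linear_combination Complex.I * h +
      (fderiv ℝ W z 1 + Complex.I * fderiv ℝ W z Complex.I) * Complex.I_mul_I
  intro z
  exact kernel W hWs hW1 hWω hpde hk z
end
end
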